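/- arXiv:2605.05958 — 6 statements merged into one kernel-verified Lean document; each statement's English description precedes it below -/
import Mathlib

section
/- Under the DR estimator setup, the expectation of the DR estimator over the observation variables equals E[R̂_DR] = (1/N) Σ_{i∈D} [ e_i · (p_i/p̂_i) + ê_i · (1 − p_i/p̂_i) ]; equivalently, E[R̂_DR] − R_true = −(1/N) Σ_{i∈D} Δ_i · δ_i. -/
open MeasureTheory ProbabilityTheory

lemma o_integrable {Ω : Type*} [MeasurableSpace Ω] (P : Measure Ω) [IsProbabilityMeasure P]
    (f : Ω → ℝ) (hmeas : Measurable f) (h01 : ∀ ω, f ω = 0 ∨ f ω = 1) :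
    Integrable f P := by
  refine ⟨hmeas.aestronglyMeasurable, ?_⟩
  apply HasFiniteIntegral.of_bounded (C := 1)
  filter_upwards with ω
  rcases h01 ω with h | h <;> simp [h]

lemma o_integral {Ω : Type*} [MeasurableSpace Ω] (P : Measure Ω) [IsProbabilityMeasure P]
    (f : Ω → ℝ) (hmeas : Measurable f) (h01 : ∀ ω, f ω = 0 ∨ f ω = 1) :
    ∫ ω, f ω ∂P = (P {ω | f ω = 1}).toReal := by
  have hset : MeasurableSet {ω | f ω = 1} := hmeas (measurableSet_singleton 1)
  have hf : f = Set.indicator {ω | f ω = 1} (1 : Ω → ℝ) := by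
    funext ω
    rcases h01 ω with h | h
    · simp [Set.indicator_apply, h, Set.mem_setOf_eq]
    · simp [Set.indicator_apply, h, Set.mem_setOf_eq]
  conv_lhs => rw [hf]
  rw [integral_indicator_one hset]
  rfl

/-- Under the DR estimator setup, the expectation of the DR estimator
over the observation variables equals
`E[R̂_DR] = (1/N) Σ_i [ e_i (p_i/p̂_i) + ê_i (1 − p_i/p̂_i) ]`; equivalently,
`E[R̂_DR] − R_true = −(1/N) Σ_i Δ_i δ_i` where `δ_i = e_i − ê_i`, `Δ_i = 1 − p_i/p̂_i`. -/
theorem dr_estimator_expectation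
    {Ω : Type*} [MeasurableSpace Ω] (P : Measure Ω) [IsProbabilityMeasure P]
    {ι : Type*} [Fintype ι] (N : ℕ) (hN : 1 ≤ N) (hcard : Fintype.card ι = N)
    (e ehat p phat : ι → ℝ)
    (hp : ∀ i, p i ∈ Set.Icc (0 : ℝ) 1)
    (hphat : ∀ i, phat i ∈ Set.Ioc (0 : ℝ) 1)
    (o : ι → Ω → ℝ) (ho_meas : ∀ i, Measurable (o i))
    (ho01 : ∀ i ω, o i ω = 0 ∨ o i ω = 1)
    (hindep : iIndepFun o P)
    (hprob : ∀ i, (P {ω | o i ω = 1}).toReal = p i) :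
    (∫ ω, (1 / (N : ℝ)) * ∑ i, (ehat i + o i ω / phat i * (e i - ehat i)) ∂P)
        = (1 / (N : ℝ)) * ∑ i, (e i * (p i / phat i) + ehat i * (1 - p i / phat i))
      ∧
    (∫ ω, (1 / (N : ℝ)) * ∑ i, (ehat i + o i ω / phat i * (e i - ehat i)) ∂P)
        - (1 / (N : ℝ)) * ∑ i, e i
      = -((1 / (N : ℝ)) * ∑ i, (1 - p i / phat i) * (e i - ehat i)) := by
  have hoint : ∀ i, Integrable (o i) P := fun i => o_integrable P (o i) (ho_meas i) (ho01 i)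
  have hterm : ∀ i, Integrable (fun ω => ehat i + o i ω / phat i * (e i - ehat i)) P := by
    intro i
    have : Integrable (fun ω => o i ω * ((e i - ehat i) / phat i)) P := (hoint i).mul_const _
    have h2 := (integrable_const (ehat i)).add this
    refine h2.congr ?_
    filter_upwards with ω
    simp only [Pi.add_apply]
    ring
  have hmain : (∫ ω, (1 / (N : ℝ)) * ∑ i, (ehat i + o i ω / phat i * (e i - ehat i)) ∂P)
      = (1 / (N : ℝ)) * ∑ i, (ehat i + p i / phat i * (e i - ehat i)) := by
    rw [integral_const_mul, integral_finset_sum _ (fun i _ => hterm i)]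
    congr 1
    apply Finset.sum_congr rfl
    intro i _
    have : (∫ ω, (ehat i + o i ω / phat i * (e i - ehat i)) ∂P)
        = ∫ ω, (ehat i + o i ω * ((e i - ehat i) / phat i)) ∂P := by
      congr 1; funext ω; ring
    rw [this, integral_add (integrable_const _) ((hoint i).mul_const _),
      integral_const, integral_mul_const, o_integral P (o i) (ho_meas i) (ho01 i), hprob i]
    simp; ring
  constructor
  · rw [hmain]; congr 1; apply Finset.sum_congr rfl; intro i _; ring
  · rw [hmain, ← mul_sub, ← Finset.sum_sub_distrib, neg_mul_eq_mul_neg,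
      ← Finset.sum_neg_distrib]
    congr 1
    apply Finset.sum_congr rfl
    intro i _
    ring
end

section
/- (Bias of the DR estimator.) Under the DR estimator setup, the bias of the DR estimator is bounded by the product of the errors of the two auxiliary models: | E[R̂_DR] − R_true | ≤ (1/N) Σ_{i∈D} | Δ_i · δ_i |. -/
open MeasureTheory ProbabilityTheory

/-- **Bias of the DR estimator.** Under the DR estimator setup, the bias of
the DR estimator is bounded by the product of the errors of the two auxiliary models:
`| E[R̂_DR] − R_true | ≤ (1/N) Σ_i | Δ_i · δ_i |`,
where `δ_i = e_i − ê_i` and `Δ_i = 1 − p_i/p̂_i`. -/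
theorem dr_estimator_bias_bound
    {Ω : Type*} [MeasurableSpace Ω] (P : Measure Ω) [IsProbabilityMeasure P]
    {ι : Type*} [Fintype ι] (N : ℕ) (hN : 1 ≤ N) (hcard : Fintype.card ι = N)
    (e ehat p phat : ι → ℝ)
    (hp : ∀ i, p i ∈ Set.Icc (0 : ℝ) 1)
    (hphat : ∀ i, phat i ∈ Set.Ioc (0 : ℝ) 1)
    (o : ι → Ω → ℝ) (ho_meas : ∀ i, Measurable (o i))
    (ho01 : ∀ i ω, o i ω = 0 ∨ o i ω = 1)
    (hindep : iIndepFun o P)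
    (hprob : ∀ i, (P {ω | o i ω = 1}).toReal = p i) :
    |(∫ ω, (1 / (N : ℝ)) * ∑ i, (ehat i + o i ω / phat i * (e i - ehat i)) ∂P)
        - (1 / (N : ℝ)) * ∑ i, e i|
      ≤ (1 / (N : ℝ)) * ∑ i, |(1 - p i / phat i) * (e i - ehat i)| := by
  have hoind : ∀ i, o i = Set.indicator {ω | o i ω = 1} (fun _ => (1:ℝ)) := by
    intro i
    funext ω
    rcases ho01 i ω with h | h <;> simp [Set.indicator, h]
  have hmeas_set : ∀ i, MeasurableSet {ω | o i ω = 1} := by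
    intro i
    exact (ho_meas i) (measurableSet_singleton 1)
  have hint : ∀ i, Integrable (o i) P := by
    intro i
    rw [hoind i]
    exact (integrableOn_const (measure_ne_top P _)).integrable_indicator (hmeas_set i)
  have hoE : ∀ i, ∫ ω, o i ω ∂P = p i := by
    intro i
    rw [← hprob i]
    conv_lhs => rw [show (fun ω => o i ω) = o i from rfl, hoind i]
    rw [integral_indicator_const (1:ℝ) (hmeas_set i)]
    simp
    rfl
  -- compute the integral
  have hterm_int : ∀ i, Integrable (fun ω => ehat i + o i ω / phat i * (e i - ehat i)) P := by
    intro i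
    apply (integrable_const _).add
    have : (fun ω => o i ω / phat i * (e i - ehat i))
        = fun ω => o i ω * ((e i - ehat i) / phat i) := by
      funext ω; ring
    rw [this]
    exact (hint i).mul_const _
  have hI : (∫ ω, (1 / (N : ℝ)) * ∑ i, (ehat i + o i ω / phat i * (e i - ehat i)) ∂P)
      = (1 / (N : ℝ)) * ∑ i, (ehat i + p i / phat i * (e i - ehat i)) := by
    rw [integral_const_mul, integral_finset_sum _ (fun i _ => hterm_int i)]
    congr 1
    refine Finset.sum_congr rfl fun i _ => ?_
    rw [integral_add (integrable_const _) ?_]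
    · have : (fun ω => o i ω / phat i * (e i - ehat i))
          = fun ω => o i ω * ((e i - ehat i) / phat i) := by
        funext ω; ring
      rw [this, integral_mul_const, hoE i]
      simp
      ring
    · have : (fun ω => o i ω / phat i * (e i - ehat i))
          = fun ω => o i ω * ((e i - ehat i) / phat i) := by
        funext ω; ring
      rw [this]
      exact (hint i).mul_const _
  rw [hI]
  have halg : (1 / (N : ℝ)) * ∑ i, (ehat i + p i / phat i * (e i - ehat i))
      - (1 / (N : ℝ)) * ∑ i, e i
      = (1 / (N : ℝ)) * ∑ i, (-((1 - p i / phat i) * (e i - ehat i))) := by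
    rw [← mul_sub, ← Finset.sum_sub_distrib]
    congr 1
    refine Finset.sum_congr rfl fun i _ => ?_
    ring
  rw [halg]
  rw [abs_mul]
  have hNpos : (0:ℝ) < N := by exact_mod_cast hN
  rw [abs_of_pos (by positivity : (0:ℝ) < 1 / (N:ℝ))]
  refine mul_le_mul_of_nonneg_left ?_ (by positivity)
  calc |∑ i, (-((1 - p i / phat i) * (e i - ehat i)))|
      ≤ ∑ i, |(-((1 - p i / phat i) * (e i - ehat i)))| := Finset.abs_sum_le_sum_abs _ _
    _ = ∑ i, |(1 - p i / phat i) * (e i - ehat i)| := by simp [abs_neg]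
end

section
/- (Generalization bound of the DR estimator.) Under the DR estimator setup with the hypothesis-class extension, write Δ_i = 1 − p_i/p̂_i. For every η ∈ (0,1), with probability at least 1 − η the following holds simultaneously for every h ∈ 𝓗: R_true(h) ≤ R̂_DR(h) + (1/N) Σ_{i∈D} | Δ_i · δ_i(h) | + sqrt( ln(2|𝓗|/η) / (2 N²) · Σ_{i∈D} ( δ_i(h)/p̂_i )² ). -/
open MeasureTheory ProbabilityTheory

open Real Finset

set_option linter.unusedSectionVars false
set_option maxHeartbeats 1000000

lemma bern_mgf_bound {p : ℝ} (hp0 : 0 ≤ p) (hp1 : p ≤ 1) (u : ℝ) :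
    1 - p + p * Real.exp u ≤ Real.exp (p * u + u ^ 2 / 8) := by
  have hD : ∀ v : ℝ, 0 < 1 - p + p * Real.exp v := by
    intro v
    rcases le_or_gt (Real.exp v) 1 with h | h
    · nlinarith [Real.exp_pos v]
    · nlinarith [Real.exp_pos v]
  set G1 : ℝ → ℝ := fun v => p + v / 4 - p * Real.exp v / (1 - p + p * Real.exp v) with hG1def
  have hG1 : ∀ v, HasDerivAt G1
      (1 / 4 - p * Real.exp v * (1 - p) / (1 - p + p * Real.exp v) ^ 2) v := by
    intro v
    have h1 : HasDerivAt (fun w => p * Real.exp w) (p * Real.exp v) v :=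
      (Real.hasDerivAt_exp v).const_mul p
    have hden : HasDerivAt (fun w => 1 - p + p * Real.exp w) (p * Real.exp v) v :=
      h1.const_add (1 - p)
    have hquot := h1.div hden (hD v).ne'
    have hlin : HasDerivAt (fun w : ℝ => p + w / 4) (1 / 4) v := by
      simpa using ((hasDerivAt_id v).div_const 4).const_add p
    have := hlin.sub hquot
    refine this.congr_deriv ?_
    have := (hD v).ne'
    field_simp
    ring
  have hG1diff : Differentiable ℝ G1 := fun v => (hG1 v).differentiableAt
  have hG1mono : Monotone G1 := by
    apply monotone_of_deriv_nonneg hG1diff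
    intro v
    rw [(hG1 v).deriv]
    have h2 : (0:ℝ) < (1 - p + p * Real.exp v) ^ 2 := pow_pos (hD v) 2
    rw [sub_nonneg, div_le_iff₀ h2]
    nlinarith [sq_nonneg ((1 - p) - p * Real.exp v), Real.exp_pos v]
  have hG10 : G1 0 = 0 := by
    simp [hG1def]
  set g : ℝ → ℝ := fun v => p * v + v ^ 2 / 8 - Real.log (1 - p + p * Real.exp v) with hgdef
  have hg : ∀ v, HasDerivAt g (G1 v) v := by
    intro v
    have h1 : HasDerivAt (fun w => p * Real.exp w) (p * Real.exp v) v :=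
      (Real.hasDerivAt_exp v).const_mul p
    have hden : HasDerivAt (fun w => 1 - p + p * Real.exp w) (p * Real.exp v) v :=
      h1.const_add (1 - p)
    have hlog : HasDerivAt (fun w => Real.log (1 - p + p * Real.exp w))
        ((1 - p + p * Real.exp v)⁻¹ * (p * Real.exp v)) v :=
      by have := (Real.hasDerivAt_log (hD v).ne').comp v hden; exact this
    have hpoly : HasDerivAt (fun w : ℝ => p * w + w ^ 2 / 8) (p + 2 * v ^ 1 / 8) v := by
      exact (((hasDerivAt_id v).const_mul p).add ((hasDerivAt_pow 2 v).div_const 8)).congr_deriv (by norm_num)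
    have := hpoly.sub hlog
    refine this.congr_deriv ?_
    simp only [hG1def, pow_one]
    field_simp
    ring
  have hgdiff : Differentiable ℝ g := fun v => (hg v).differentiableAt
  have hg0 : g 0 = 0 := by
    simp [hgdef]
  have hmain : 0 ≤ g u := by
    rcases le_total 0 u with h | h
    · have hmOn : MonotoneOn g (Set.Ici (0:ℝ)) := by
        apply monotoneOn_of_deriv_nonneg (convex_Ici 0) hgdiff.continuous.continuousOn
          hgdiff.differentiableOn
        intro x hx
        rw [(hg x).deriv]
        rw [interior_Ici] at hx
        have := hG1mono (le_of_lt hx)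
        rw [hG10] at this
        exact this
      have := hmOn (Set.self_mem_Ici) h h
      rw [hg0] at this
      exact this
    · have hmOn : AntitoneOn g (Set.Iic (0:ℝ)) := by
        apply antitoneOn_of_deriv_nonpos (convex_Iic 0) hgdiff.continuous.continuousOn
          hgdiff.differentiableOn
        intro x hx
        rw [(hg x).deriv]
        rw [interior_Iic] at hx
        have := hG1mono (le_of_lt hx)
        rw [hG10] at this
        exact this
      have := hmOn h (Set.self_mem_Iic) h
      rw [hg0] at this
      exact this
  have hlog' : Real.log (1 - p + p * Real.exp u) ≤ p * u + u ^ 2 / 8 := by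
    simp only [hgdef] at hmain
    linarith
  calc 1 - p + p * Real.exp u = Real.exp (Real.log (1 - p + p * Real.exp u)) :=
        (Real.exp_log (hD u)).symm
    _ ≤ Real.exp (p * u + u ^ 2 / 8) := Real.exp_le_exp.mpr hlog'

section
variable {Ω : Type*} [MeasurableSpace Ω] (P : Measure Ω) [IsProbabilityMeasure P]

lemma o_indicator (X : Ω → ℝ) (hX01 : ∀ ω, X ω = 0 ∨ X ω = 1) :
    X = Set.indicator (X ⁻¹' {1}) (fun _ => (1:ℝ)) := by
  funext ω
  rcases hX01 ω with h | h
  · have : ω ∉ X ⁻¹' {1} := by simp [Set.mem_preimage, h]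
    simp [Set.indicator_of_notMem this, h]
  · have : ω ∈ X ⁻¹' {1} := by simp [Set.mem_preimage, h]
    simp [Set.indicator_of_mem this, h]

lemma o_integrable_s7 (X : Ω → ℝ) (hX : Measurable X) (hX01 : ∀ ω, X ω = 0 ∨ X ω = 1) :
    Integrable X P := by
  rw [o_indicator X hX01]
  exact (integrable_const (1:ℝ)).indicator (hX (measurableSet_singleton 1))

lemma o_integral_s7 (X : Ω → ℝ) (hX : Measurable X) (hX01 : ∀ ω, X ω = 0 ∨ X ω = 1) :
    ∫ ω, X ω ∂P = (P {ω | X ω = 1}).toReal := by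
  conv_lhs => rw [o_indicator X hX01]
  rw [integral_indicator_const (1:ℝ) (hX (measurableSet_singleton 1))]
  simp only [smul_eq_mul, mul_one]
  rfl

lemma mgf_bernoulli (X : Ω → ℝ) (hX : Measurable X) (hX01 : ∀ ω, X ω = 0 ∨ X ω = 1)
    {q : ℝ} (hq : (P {ω | X ω = 1}).toReal = q) (r : ℝ) :
    ∫ ω, Real.exp (r * X ω) ∂P = 1 - q + q * Real.exp r := by
  have hpt : ∀ ω, Real.exp (r * X ω) = 1 + (Real.exp r - 1) * X ω := by
    intro ω
    rcases hX01 ω with h | h <;> simp [h]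
  simp_rw [hpt]
  rw [integral_add (integrable_const 1)
      (((o_integrable_s7 P X hX hX01)).const_mul _)]
  rw [integral_const, integral_const_mul, o_integral_s7 P X hX hX01, hq]
  simp
  ring

lemma chernoff_aux {ι : Type*} [Fintype ι] (p : ι → ℝ)
    (hp : ∀ i, p i ∈ Set.Icc (0 : ℝ) 1)
    (o : ι → Ω → ℝ) (ho_meas : ∀ i, Measurable (o i))
    (ho01 : ∀ i ω, o i ω = 0 ∨ o i ω = 1)
    (hindep : iIndepFun o P)
    (hprob : ∀ i, (P {ω | o i ω = 1}).toReal = p i)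
    (a : ι → ℝ) {ε : ℝ} (hε : 0 ≤ ε) (hc : 0 < ∑ i, a i ^ 2) :
    P {ω | ε ≤ ∑ i, a i * (p i - o i ω)} ≤
      ENNReal.ofReal (Real.exp (-2 * ε ^ 2 / ∑ i, a i ^ 2)) := by
  classical
  set c := ∑ i, a i ^ 2 with hcdef
  set t : ℝ := 4 * ε / c with htdef
  have ht : 0 ≤ t := by positivity
  set Y : ι → Ω → ℝ := fun i ω => a i * (p i - o i ω) with hYdef
  have hYmeas : ∀ i, Measurable (Y i) := fun i =>
    (measurable_const.sub (ho_meas i)).const_mul (a i)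
  have hYindep : iIndepFun Y P := by
    have := hindep.comp (fun i (x : ℝ) => a i * (p i - x))
      (fun i => (measurable_const.sub measurable_id).const_mul (a i))
    exact this
  -- integrability of exp (t * Y i)
  have hYint : ∀ (s : ℝ) (i : ι), Integrable (fun ω => Real.exp (s * Y i ω)) P := by
    intro s i
    apply Integrable.mono' (integrable_const (Real.exp (|s| * (|a i| * (|p i| + 1)))))
      (((hYmeas i).const_mul s).exp.aestronglyMeasurable)
    filter_upwards with ω
    rw [Real.norm_eq_abs, Real.abs_exp]
    apply Real.exp_le_exp.mpr
    have h1 : |p i - o i ω| ≤ |p i| + 1 := by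
      rcases ho01 i ω with h | h <;> rw [h] <;>
        [simpa using (abs_le_abs (le_abs_self _) (neg_abs_le _)).trans (by linarith);
         exact (abs_sub _ _ ).trans (by simp)]
    calc s * Y i ω ≤ |s * Y i ω| := le_abs_self _
      _ = |s| * (|a i| * |p i - o i ω|) := by rw [abs_mul, abs_mul]
      _ ≤ |s| * (|a i| * (|p i| + 1)) := by
          apply mul_le_mul_of_nonneg_left _ (abs_nonneg s)
          exact mul_le_mul_of_nonneg_left h1 (abs_nonneg _)
  -- mgf of each Y i
  have hmgf_i : ∀ i, mgf (Y i) P t ≤ Real.exp (t ^ 2 * a i ^ 2 / 8) := by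
    intro i
    have hcalc : mgf (Y i) P t
        = Real.exp (t * (a i * p i)) * (1 - p i + p i * Real.exp (-(t * a i))) := by
      rw [mgf]
      have : ∀ ω, Real.exp (t * Y i ω)
          = Real.exp (t * (a i * p i)) * Real.exp (-(t * a i) * o i ω) := by
        intro ω
        rw [← Real.exp_add]
        congr 1
        simp only [hYdef]
        ring
      simp_rw [this]
      rw [integral_const_mul, mgf_bernoulli P (o i) (ho_meas i) (ho01 i) (hprob i)]
    rw [hcalc]
    calc Real.exp (t * (a i * p i)) * (1 - p i + p i * Real.exp (-(t * a i)))
        ≤ Real.exp (t * (a i * p i)) *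
            Real.exp (p i * (-(t * a i)) + (-(t * a i)) ^ 2 / 8) := by
          apply mul_le_mul_of_nonneg_left
            (bern_mgf_bound (hp i).1 (hp i).2 _) (Real.exp_nonneg _)
      _ = Real.exp (t ^ 2 * a i ^ 2 / 8) := by
          rw [← Real.exp_add]; congr 1; ring
  -- Chernoff
  have hset : {ω | ε ≤ ∑ i, a i * (p i - o i ω)} = {ω | ε ≤ (∑ i, Y i) ω} := by
    ext ω; simp [hYdef, Finset.sum_apply]
  have hint : Integrable (fun ω => Real.exp (t * (∑ i, Y i) ω)) P :=
    hYindep.integrable_exp_mul_sum hYmeas (fun i _ => hYint t i)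
  have hch := measure_ge_le_exp_mul_mgf (μ := P) (X := ∑ i, Y i) ε ht hint
  have hmgf_sum : mgf (∑ i, Y i) P t ≤ Real.exp (t ^ 2 * c / 8) := by
    rw [hYindep.mgf_sum hYmeas]
    calc ∏ i, mgf (Y i) P t ≤ ∏ i, Real.exp (t ^ 2 * a i ^ 2 / 8) :=
          Finset.prod_le_prod (fun i _ => mgf_nonneg) (fun i _ => hmgf_i i)
      _ = Real.exp (∑ i, t ^ 2 * a i ^ 2 / 8) := by rw [Real.exp_sum]
      _ = Real.exp (t ^ 2 * c / 8) := by
          congr 1; rw [hcdef, Finset.mul_sum, Finset.sum_div]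
  have hfinal : (P {ω | ε ≤ (∑ i, Y i) ω}).toReal ≤ Real.exp (-2 * ε ^ 2 / c) := by
    calc (P {ω | ε ≤ (∑ i, Y i) ω}).toReal
        ≤ Real.exp (-t * ε) * mgf (∑ i, Y i) P t := hch
      _ ≤ Real.exp (-t * ε) * Real.exp (t ^ 2 * c / 8) :=
          mul_le_mul_of_nonneg_left hmgf_sum (Real.exp_nonneg _)
      _ = Real.exp (-t * ε + t ^ 2 * c / 8) := by rw [← Real.exp_add]
      _ = Real.exp (-2 * ε ^ 2 / c) := by
          congr 1
          rw [htdef]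
          field_simp
          ring
  rw [hset]
  rw [← ENNReal.ofReal_toReal (measure_ne_top P _)]
  exact ENNReal.ofReal_le_ofReal hfinal

end

/-- **Generalization bound of the DR estimator.** Under the DR estimator
setup with the hypothesis-class extension, writing `Δ_i = 1 − p_i/p̂_i` and
`δ_i(h) = e_i(h) − ê_i(h)`, for every `η ∈ (0,1)`, with probability at least `1 − η`,
simultaneously for every `h ∈ 𝓗`:
`R_true(h) ≤ R̂_DR(h) + (1/N) Σ_i |Δ_i δ_i(h)|
  + sqrt( ln(2|𝓗|/η) / (2N²) · Σ_i (δ_i(h)/p̂_i)² )`. -/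
theorem dr_estimator_generalization_bound
    {Ω : Type*} [MeasurableSpace Ω] (P : Measure Ω) [IsProbabilityMeasure P]
    {ι : Type*} [Fintype ι] (N : ℕ) (hN : 1 ≤ N) (hcard : Fintype.card ι = N)
    {H : Type*} [Fintype H] [Nonempty H]
    (e ehat : H → ι → ℝ) (p phat : ι → ℝ)
    (hp : ∀ i, p i ∈ Set.Icc (0 : ℝ) 1)
    (hphat : ∀ i, phat i ∈ Set.Ioc (0 : ℝ) 1)
    (o : ι → Ω → ℝ) (ho_meas : ∀ i, Measurable (o i))
    (ho01 : ∀ i ω, o i ω = 0 ∨ o i ω = 1)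
    (hindep : iIndepFun o P)
    (hprob : ∀ i, (P {ω | o i ω = 1}).toReal = p i)
    (η : ℝ) (hη : η ∈ Set.Ioo (0 : ℝ) 1) :
    ENNReal.ofReal (1 - η) ≤
      P {ω | ∀ h : H,
        (1 / (N : ℝ)) * ∑ i, e h i
          ≤ (1 / (N : ℝ)) * ∑ i, (ehat h i + o i ω / phat i * (e h i - ehat h i))
            + (1 / (N : ℝ)) * ∑ i, |(1 - p i / phat i) * (e h i - ehat h i)|
            + Real.sqrt
                (Real.log (2 * (Fintype.card H : ℝ) / η) / (2 * (N : ℝ) ^ 2)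
                  * ∑ i, ((e h i - ehat h i) / phat i) ^ 2)} := by
  classical
  obtain ⟨hη0, hη1⟩ := hη
  have hNpos : (0:ℝ) < N := by
    have : 0 < N := hN
    exact_mod_cast this
  have hHcard : (1:ℝ) ≤ (Fintype.card H : ℝ) := by exact_mod_cast Fintype.card_pos
  set K := Real.log (2 * (Fintype.card H : ℝ) / η) with hKdef
  have hfrac : (1:ℝ) < 2 * (Fintype.card H : ℝ) / η := by
    rw [lt_div_iff₀ hη0]
    nlinarith
  have hK : 0 < K := Real.log_pos hfrac
  set a : H → ι → ℝ := fun h i => (e h i - ehat h i) / phat i with hadef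
  set c : H → ℝ := fun h => ∑ i, a h i ^ 2 with hcdef
  have hcnn : ∀ h, 0 ≤ c h := fun h => Finset.sum_nonneg fun i _ => sq_nonneg _
  set ε : H → ℝ := fun h => Real.sqrt (K * c h / 2) with hεdef
  have hsqrt : ∀ h : H, Real.sqrt (K / (2 * (N:ℝ) ^ 2) * c h) = ε h / N := by
    intro h
    rw [show K / (2 * (N:ℝ) ^ 2) * c h = (K * c h / 2) / (N:ℝ) ^ 2 by ring,
      Real.sqrt_div (by positivity) _, Real.sqrt_sq hNpos.le, hεdef]
  -- the per-hypothesis good statement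
  have hclaim : ∀ (ω : Ω) (h : H),
      (∑ i, a h i * (p i - o i ω)) ≤ ε h →
      (1 / (N : ℝ)) * ∑ i, e h i
        ≤ (1 / (N : ℝ)) * ∑ i, (ehat h i + o i ω / phat i * (e h i - ehat h i))
          + (1 / (N : ℝ)) * ∑ i, |(1 - p i / phat i) * (e h i - ehat h i)|
          + Real.sqrt (K / (2 * (N : ℝ) ^ 2) * ∑ i, ((e h i - ehat h i) / phat i) ^ 2) := by
    intro ω h hS
    have hcs : ∑ i, ((e h i - ehat h i) / phat i) ^ 2 = c h := rfl
    rw [hcs, hsqrt h]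
    have e1 : ∑ i, e h i
        = ∑ i, (ehat h i + o i ω / phat i * (e h i - ehat h i))
          + ((∑ i, a h i * (p i - o i ω))
            + ∑ i, (1 - p i / phat i) * (e h i - ehat h i)) := by
      rw [← Finset.sum_add_distrib, ← Finset.sum_add_distrib]
      apply Finset.sum_congr rfl
      intro i _
      have hpi : phat i ≠ 0 := (hphat i).1.ne'
      simp only [hadef]
      field_simp
      ring
    have f1 : ∑ i, (1 - p i / phat i) * (e h i - ehat h i)
        ≤ ∑ i, |(1 - p i / phat i) * (e h i - ehat h i)| :=
      Finset.sum_le_sum fun i _ => le_abs_self _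
    have h1N : (0:ℝ) ≤ 1 / N := by positivity
    rw [e1]
    have g1 := mul_le_mul_of_nonneg_left f1 h1N
    have g2 := mul_le_mul_of_nonneg_left hS h1N
    have g3 : (1 / (N:ℝ)) * ε h = ε h / N := by ring
    nlinarith [g1, g2]
  -- bad events
  set Bad : H → Set Ω :=
    fun h => if 0 < c h then {ω | ε h ≤ ∑ i, a h i * (p i - o i ω)} else ∅ with hBaddef
  have hTmeas : ∀ h : H, MeasurableSet {ω |
      (1 / (N : ℝ)) * ∑ i, e h i
        ≤ (1 / (N : ℝ)) * ∑ i, (ehat h i + o i ω / phat i * (e h i - ehat h i))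
          + (1 / (N : ℝ)) * ∑ i, |(1 - p i / phat i) * (e h i - ehat h i)|
          + Real.sqrt (K / (2 * (N : ℝ) ^ 2)
              * ∑ i, ((e h i - ehat h i) / phat i) ^ 2)} := by
    intro h
    apply measurableSet_le measurable_const
    apply Measurable.add_const
    apply Measurable.add_const
    apply Measurable.const_mul
    apply Finset.measurable_sum
    intro i _
    exact measurable_const.add (((ho_meas i).div_const _).mul_const _)
  have hEeq : {ω : Ω | ∀ h : H,
      (1 / (N : ℝ)) * ∑ i, e h i
        ≤ (1 / (N : ℝ)) * ∑ i, (ehat h i + o i ω / phat i * (e h i - ehat h i))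
          + (1 / (N : ℝ)) * ∑ i, |(1 - p i / phat i) * (e h i - ehat h i)|
          + Real.sqrt (K / (2 * (N : ℝ) ^ 2)
              * ∑ i, ((e h i - ehat h i) / phat i) ^ 2)}
      = ⋂ h : H, {ω |
      (1 / (N : ℝ)) * ∑ i, e h i
        ≤ (1 / (N : ℝ)) * ∑ i, (ehat h i + o i ω / phat i * (e h i - ehat h i))
          + (1 / (N : ℝ)) * ∑ i, |(1 - p i / phat i) * (e h i - ehat h i)|
          + Real.sqrt (K / (2 * (N : ℝ) ^ 2)
              * ∑ i, ((e h i - ehat h i) / phat i) ^ 2)} := by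
    ext ω
    simp [Set.mem_iInter]
  have hEmeas : MeasurableSet {ω : Ω | ∀ h : H,
      (1 / (N : ℝ)) * ∑ i, e h i
        ≤ (1 / (N : ℝ)) * ∑ i, (ehat h i + o i ω / phat i * (e h i - ehat h i))
          + (1 / (N : ℝ)) * ∑ i, |(1 - p i / phat i) * (e h i - ehat h i)|
          + Real.sqrt (K / (2 * (N : ℝ) ^ 2)
              * ∑ i, ((e h i - ehat h i) / phat i) ^ 2)} := by
    rw [hEeq]
    exact MeasurableSet.iInter fun h => hTmeas h
  have hcompl : {ω : Ω | ∀ h : H,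
      (1 / (N : ℝ)) * ∑ i, e h i
        ≤ (1 / (N : ℝ)) * ∑ i, (ehat h i + o i ω / phat i * (e h i - ehat h i))
          + (1 / (N : ℝ)) * ∑ i, |(1 - p i / phat i) * (e h i - ehat h i)|
          + Real.sqrt (K / (2 * (N : ℝ) ^ 2)
              * ∑ i, ((e h i - ehat h i) / phat i) ^ 2)}ᶜ ⊆ ⋃ h : H, Bad h := by
    intro ω hω
    simp only [Set.mem_compl_iff, Set.mem_setOf_eq, not_forall] at hω
    obtain ⟨h, hh⟩ := hω
    have hgt : ε h < ∑ i, a h i * (p i - o i ω) := by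
      by_contra hle
      push_neg at hle
      exact hh (hclaim ω h hle)
    have hcpos : 0 < c h := by
      rcases (hcnn h).lt_or_eq with h' | h'
      · exact h'
      · exfalso
        have hz : ∀ i, a h i = 0 := by
          intro i
          have := (Finset.sum_eq_zero_iff_of_nonneg
            (fun i _ => sq_nonneg (a h i))).mp h'.symm i (Finset.mem_univ i)
          exact (pow_eq_zero_iff (two_ne_zero)).mp this
        have hS0 : ∑ i, a h i * (p i - o i ω) = 0 :=
          Finset.sum_eq_zero fun i _ => by rw [hz i, zero_mul]
        have hε0 : ε h = 0 := by
          rw [hεdef]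
          simp only [← h'.symm]
          rw [← h', mul_zero, zero_div, Real.sqrt_zero]
        rw [hS0, hε0] at hgt
        exact lt_irrefl 0 hgt
    refine Set.mem_iUnion.mpr ⟨h, ?_⟩
    rw [hBaddef]
    simp only [if_pos hcpos, Set.mem_setOf_eq]
    exact hgt.le
  have hBadle : ∀ h : H, P (Bad h) ≤ ENNReal.ofReal (η / (2 * (Fintype.card H : ℝ))) := by
    intro h
    by_cases hcpos : 0 < c h
    · rw [hBaddef]
      simp only [if_pos hcpos]
      have hch := chernoff_aux P p hp o ho_meas ho01 hindep hprob (a h)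
        (Real.sqrt_nonneg (K * c h / 2)) (show (0:ℝ) < ∑ i, a h i ^ 2 from hcpos)
      refine hch.trans (ENNReal.ofReal_le_ofReal ?_)
      have hε2 : (ε h) ^ 2 = K * c h / 2 := Real.sq_sqrt (by positivity)
      have hexp : -2 * (ε h) ^ 2 / (∑ i, a h i ^ 2) = -K := by
        have hcr : (∑ i, a h i ^ 2) = c h := rfl
        rw [hcr, hε2]
        have hcne := hcpos.ne'
        field_simp
      rw [hexp, Real.exp_neg, hKdef, Real.exp_log (by positivity : (0:ℝ) < 2 * (Fintype.card H : ℝ) / η)]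
      rw [← one_div, one_div_div]
    · rw [hBaddef]
      simp only [if_neg hcpos]
      simp
  have hU : P (⋃ h : H, Bad h) ≤ ENNReal.ofReal η := by
    refine (measure_iUnion_fintype_le P Bad).trans ?_
    calc ∑ h : H, P (Bad h)
        ≤ ∑ _x : H, ENNReal.ofReal (η / (2 * (Fintype.card H : ℝ))) :=
          Finset.sum_le_sum fun h _ => hBadle h
      _ = ((Fintype.card H : ℕ) : ENNReal) * ENNReal.ofReal (η / (2 * (Fintype.card H : ℝ))) := by
          rw [Finset.sum_const, nsmul_eq_mul, Finset.card_univ]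
      _ = ENNReal.ofReal ((Fintype.card H : ℝ) * (η / (2 * (Fintype.card H : ℝ)))) := by
          rw [← ENNReal.ofReal_natCast, ← ENNReal.ofReal_mul (by positivity)]
      _ ≤ ENNReal.ofReal η := by
          apply ENNReal.ofReal_le_ofReal
          rw [show (Fintype.card H : ℝ) * (η / (2 * (Fintype.card H : ℝ))) = η / 2 by
            field_simp]
          linarith
  have h3 : P ({ω : Ω | ∀ h : H,
      (1 / (N : ℝ)) * ∑ i, e h i
        ≤ (1 / (N : ℝ)) * ∑ i, (ehat h i + o i ω / phat i * (e h i - ehat h i))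
          + (1 / (N : ℝ)) * ∑ i, |(1 - p i / phat i) * (e h i - ehat h i)|
          + Real.sqrt (K / (2 * (N : ℝ) ^ 2)
              * ∑ i, ((e h i - ehat h i) / phat i) ^ 2)}ᶜ) ≤ ENNReal.ofReal η :=
    le_trans (measure_mono hcompl) hU
  rw [prob_compl_eq_one_sub hEmeas] at h3
  have h4 : 1 ≤ ENNReal.ofReal η + P {ω : Ω | ∀ h : H,
      (1 / (N : ℝ)) * ∑ i, e h i
        ≤ (1 / (N : ℝ)) * ∑ i, (ehat h i + o i ω / phat i * (e h i - ehat h i))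
          + (1 / (N : ℝ)) * ∑ i, |(1 - p i / phat i) * (e h i - ehat h i)|
          + Real.sqrt (K / (2 * (N : ℝ) ^ 2)
              * ∑ i, ((e h i - ehat h i) / phat i) ^ 2)} :=
    tsub_le_iff_right.mp h3
  have h5 : ENNReal.ofReal (1 - η) = 1 - ENNReal.ofReal η := by
    apply ENNReal.eq_sub_of_add_eq ENNReal.ofReal_ne_top
    rw [← ENNReal.ofReal_add (by linarith) hη0.le]
    norm_num
  rw [h5]
  exact tsub_le_iff_left.mpr h4
end

section
/- (Path length bound / covering number of a smooth trajectory.) Let h_0, h_1, …, h_T be points of ℝ^d (Euclidean norm), T ≥ 1, and let L_smooth = Σ_{t=1}^{T} ‖h_t − h_{t−1}‖². Then for every δ > 0 the δ-covering number of the trajectory satisfies N(δ) ≤ sqrt( T · L_smooth ) / δ + 1. -/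
/-- **Covering number of a smooth trajectory.** Let `h_0, …, h_T` be
points of `ℝ^d`, `T ≥ 1`, and `L_smooth = Σ_{t=1}^T ‖h_t − h_{t−1}‖²`. Then for every
`δ > 0` the `δ`-covering number of the trajectory satisfies
`N(δ) ≤ sqrt(T · L_smooth)/δ + 1`, witnessed by a finite set of points covering the
trajectory within distance `δ`. -/
theorem trajectory_covering_by_smoothness
    {d : ℕ} (T : ℕ) (hT : 1 ≤ T) (h : ℕ → EuclideanSpace ℝ (Fin d))
    (δ : ℝ) (hδ : 0 < δ) :
    ∃ S : Finset (EuclideanSpace ℝ (Fin d)),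
      (S.card : ℝ)
          ≤ Real.sqrt ((T : ℝ) * ∑ t ∈ Finset.range T, ‖h (t + 1) - h t‖ ^ 2) / δ + 1 ∧
      ∀ t ≤ T, ∃ s ∈ S, ‖h t - s‖ ≤ δ := by
  classical
  set L : ℝ := ∑ t ∈ Finset.range T, ‖h (t + 1) - h t‖ ^ 2 with hL
  set s : ℕ → ℝ := fun t => ∑ i ∈ Finset.range t, ‖h (i + 1) - h i‖ with hs
  have hs0 : ∀ t, 0 ≤ s t := fun t => Finset.sum_nonneg fun i _ => norm_nonneg _
  have hsmono : Monotone s := by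
    intro a b hab
    exact Finset.sum_le_sum_of_subset_of_nonneg (Finset.range_subset_range.2 hab)
      (fun i _ _ => norm_nonneg _)
  have htel : ∀ u t : ℕ, u ≤ t → ‖h t - h u‖ ≤ s t - s u := by
    intro u t hut
    have h1 : h t - h u = ∑ i ∈ Finset.Ico u t, (h (i + 1) - h i) := by
      rw [Finset.sum_Ico_eq_sub _ hut, Finset.sum_range_sub, Finset.sum_range_sub]
      abel
    rw [h1]
    calc ‖∑ i ∈ Finset.Ico u t, (h (i + 1) - h i)‖
        ≤ ∑ i ∈ Finset.Ico u t, ‖h (i + 1) - h i‖ := norm_sum_le _ _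
      _ = s t - s u := by
          rw [hs]
          rw [Finset.sum_Ico_eq_sub _ hut]
  set B : ℕ → ℕ := fun t => ⌊s t / δ⌋₊ with hB
  set g : ℕ → ℕ := fun k =>
    if hk : ∃ t, t ≤ T ∧ B t = k then Nat.find hk else 0 with hg
  refine ⟨((Finset.range (T + 1)).image B).image (fun k => h (g k)), ?_, ?_⟩
  · -- cardinality bound
    have hcard1 : (((Finset.range (T + 1)).image B).image (fun k => h (g k))).card
        ≤ ((Finset.range (T + 1)).image B).card := Finset.card_image_le
    have hsub : (Finset.range (T + 1)).image B ⊆ Finset.range (B T + 1) := by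
      intro k hk
      simp only [Finset.mem_image, Finset.mem_range] at hk ⊢
      obtain ⟨t, ht, rfl⟩ := hk
      have : B t ≤ B T := Nat.floor_le_floor
        (div_le_div_of_nonneg_right (hsmono (Nat.lt_succ_iff.mp ht)) hδ.le)
      omega
    have hcard2 : ((Finset.range (T + 1)).image B).card ≤ B T + 1 := by
      simpa using Finset.card_le_card hsub
    have hBT : (B T : ℝ) ≤ s T / δ := Nat.floor_le (by positivity)
    have hsT : s T ≤ Real.sqrt ((T : ℝ) * L) := by
      have hcs : (s T) ^ 2 ≤ (T : ℝ) * L := by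
        have := sq_sum_le_card_mul_sum_sq (s := Finset.range T)
          (f := fun i => ‖h (i + 1) - h i‖)
        simpa [hL, hs] using this
      calc s T = Real.sqrt ((s T) ^ 2) := (Real.sqrt_sq (hs0 T)).symm
        _ ≤ Real.sqrt ((T : ℝ) * L) := Real.sqrt_le_sqrt hcs
    calc ((((Finset.range (T + 1)).image B).image (fun k => h (g k))).card : ℝ)
        ≤ ((B T : ℝ) + 1) := by
          exact_mod_cast le_trans hcard1 hcard2
      _ ≤ s T / δ + 1 := by linarith
      _ ≤ Real.sqrt ((T : ℝ) * L) / δ + 1 := by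
          have := div_le_div_of_nonneg_right (c := δ) hsT hδ.le
          linarith
  · -- covering
    intro t ht
    have hk : ∃ u, u ≤ T ∧ B u = B t := ⟨t, ht, rfl⟩
    set u : ℕ := g (B t) with hu
    have hgu : u = Nat.find hk := by simp [hu, hg, dif_pos hk]
    have huT : u ≤ T ∧ B u = B t := by rw [hgu]; exact Nat.find_spec hk
    have hut : u ≤ t := by rw [hgu]; exact Nat.find_min' hk ⟨ht, rfl⟩
    refine ⟨h u, ?_, ?_⟩
    · simp only [Finset.mem_image, Finset.mem_range]
      exact ⟨B t, ⟨t, by omega, rfl⟩, rfl⟩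
    · have h1 : ‖h t - h u‖ ≤ s t - s u := htel u t hut
      have h2 : (B t : ℝ) * δ ≤ s u := by
        have h2' : (B t : ℝ) ≤ s u / δ := by
          rw [← huT.2]; exact Nat.floor_le (by positivity)
        calc (B t : ℝ) * δ ≤ (s u / δ) * δ := by
              exact mul_le_mul_of_nonneg_right h2' hδ.le
          _ = s u := by field_simp
      have h3 : s t < ((B t : ℝ) + 1) * δ := by
        have := Nat.lt_floor_add_one (s t / δ)
        calc s t = (s t / δ) * δ := by field_simp
          _ < ((B t : ℝ) + 1) * δ := by
              exact mul_lt_mul_of_pos_right (by exact_mod_cast this) hδ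
      linarith
end

section
/- (Dudley entropy integral bound for empirical Rademacher complexity.) In the empirical Rademacher complexity setup, assume G is countable, the covering number N(ε) is finite for every ε > 0, and D ∈ (0,∞) satisfies d_T(g, 0) ≤ D for every g ∈ G (0 denoting the zero function). Then R̂_T(G) ≤ (12/√T) · ∫_{0}^{D} sqrt( log N(ε) ) dε. -/
open MeasureTheory

/-- The empirical metric `d_T(g,g′) = sqrt( (1/T) Σ_t (g(h_t) − g′(h_t))² )`. -/
noncomputable def empDist {Z : Type*} (T : ℕ) (h : Fin T → Z) (g g' : Z → ℝ) : ℝ :=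
  Real.sqrt ((1 / (T : ℝ)) * ∑ t, (g (h t) - g' (h t)) ^ 2)

/-- The empirical Rademacher complexity
`R̂_T(G) = E_σ[ sup_{g∈G} (1/T) Σ_t σ_t g(h_t) ]`, the expectation over independent
uniform random signs `σ_t ∈ {−1,+1}` written as an average over all sign vectors. -/
noncomputable def empRademacher {Z : Type*} (T : ℕ) (h : Fin T → Z)
    (G : Set (Z → ℝ)) : ℝ :=
  ((2 : ℝ) ^ T)⁻¹ * ∑ σ : Fin T → Bool,
    ⨆ g : G, (1 / (T : ℝ)) * ∑ t, (if σ t then (1 : ℝ) else -1) * (g : Z → ℝ) (h t)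

/-- The `ε`-covering number `N(ε, G, d_T)`: minimal cardinality of a finite `V ⊆ G` such
that every `g ∈ G` is within empirical distance `ε` of some `v ∈ V` (`⊤` if none). -/
noncomputable def coveringNumber {Z : Type*} (T : ℕ) (h : Fin T → Z)
    (G : Set (Z → ℝ)) (ε : ℝ) : ℕ∞ :=
  sInf {n : ℕ∞ | ∃ V : Finset (Z → ℝ), ↑V ⊆ G ∧ (V.card : ℕ∞) = n ∧
    ∀ g ∈ G, ∃ v ∈ V, empDist T h g v ≤ ε}

section DudleyAuxSection
open Finset Real
namespace DudleyAux

noncomputable def Emean (T : ℕ) (f : (Fin T → Bool) → ℝ) : ℝ :=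
  ((2:ℝ)^T)⁻¹ * ∑ σ : Fin T → Bool, f σ

lemma card_bool_fun (T : ℕ) : (Fintype.card (Fin T → Bool) : ℝ) = 2^T := by
  simp [Fintype.card_fun]

lemma Emean_mono {T : ℕ} {f g : (Fin T → Bool) → ℝ} (h : ∀ σ, f σ ≤ g σ) :
    Emean T f ≤ Emean T g :=
  mul_le_mul_of_nonneg_left (Finset.sum_le_sum fun σ _ => h σ) (by positivity)

lemma Emean_const (T : ℕ) (c : ℝ) : Emean T (fun _ => c) = c := by
  unfold Emean
  rw [Finset.sum_const, Finset.card_univ, nsmul_eq_mul]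
  rw [← card_bool_fun T]
  field_simp

lemma Emean_add {T : ℕ} (f g : (Fin T → Bool) → ℝ) :
    Emean T (fun σ => f σ + g σ) = Emean T f + Emean T g := by
  unfold Emean
  rw [Finset.sum_add_distrib, mul_add]

lemma Emean_sum {T : ℕ} {ι : Type*} (s : Finset ι) (F : ι → (Fin T → Bool) → ℝ) :
    Emean T (fun σ => ∑ i ∈ s, F i σ) = ∑ i ∈ s, Emean T (F i) := by
  unfold Emean
  rw [Finset.sum_comm, Finset.mul_sum]

/-- The MGF-type bound. -/
lemma massart_lambda {T : ℕ} {ι : Type*} (S : Finset ι) (hS : S.Nonempty)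
    (F : ι → Fin T → ℝ) {c : ℝ} (hc : ∀ i ∈ S, ∑ t, F i t ^ 2 ≤ c)
    {l : ℝ} (hl : 0 < l) :
    Emean T (fun σ => S.sup' hS (fun i => ∑ t, (if σ t then (1:ℝ) else -1) * F i t))
      ≤ Real.log S.card / l + l * c / 2 := by
  classical
  set A := Emean T (fun σ => S.sup' hS (fun i => ∑ t, (if σ t then (1:ℝ) else -1) * F i t)) with hA
  have hw1 : ∑ _σ : Fin T → Bool, ((2:ℝ)^T)⁻¹ = 1 := by
    rw [Finset.sum_const, Finset.card_univ, nsmul_eq_mul, ← card_bool_fun T]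
    field_simp
  -- Jensen
  have jensen : Real.exp (l * A) ≤
      Emean T (fun σ => Real.exp (l * S.sup' hS (fun i => ∑ t, (if σ t then (1:ℝ) else -1) * F i t))) := by
    have := convexOn_exp.map_sum_le (t := Finset.univ) (w := fun _ : (Fin T → Bool) => ((2:ℝ)^T)⁻¹)
      (p := fun σ => l * S.sup' hS (fun i => ∑ t, (if σ t then (1:ℝ) else -1) * F i t))
      (fun _ _ => by positivity) hw1 (fun _ _ => Set.mem_univ _)
    simp only [smul_eq_mul] at this
    calc Real.exp (l * A) = Real.exp (∑ σ : Fin T → Bool, ((2:ℝ)^T)⁻¹ * (l * S.sup' hS (fun i => ∑ t, (if σ t then (1:ℝ) else -1) * F i t))) := by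
          congr 1
          rw [hA]
          unfold Emean
          rw [Finset.mul_sum, Finset.mul_sum]
          congr 1; ext σ; ring
      _ ≤ ∑ σ : Fin T → Bool, ((2:ℝ)^T)⁻¹ * Real.exp (l * S.sup' hS (fun i => ∑ t, (if σ t then (1:ℝ) else -1) * F i t)) := this
      _ = _ := by unfold Emean; rw [Finset.mul_sum]
  -- per-σ: exp(l*sup') ≤ ∑ over i of exp (l * X i σ)
  have step2 : ∀ σ : Fin T → Bool,
      Real.exp (l * S.sup' hS (fun i => ∑ t, (if σ t then (1:ℝ) else -1) * F i t))
        ≤ ∑ i ∈ S, Real.exp (l * ∑ t, (if σ t then (1:ℝ) else -1) * F i t) := by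
    intro σ
    obtain ⟨i₀, hi₀, heq⟩ := Finset.exists_mem_eq_sup' hS (fun i => ∑ t, (if σ t then (1:ℝ) else -1) * F i t)
    rw [heq]
    exact Finset.single_le_sum (f := fun i => Real.exp (l * ∑ t, (if σ t then (1:ℝ) else -1) * F i t))
      (fun i _ => (Real.exp_pos _).le) hi₀
  -- per-i mgf bound
  have step3 : ∀ i ∈ S,
      Emean T (fun σ => Real.exp (l * ∑ t, (if σ t then (1:ℝ) else -1) * F i t))
        ≤ Real.exp (l^2 * c / 2) := by
    intro i hi
    have hprod : ∑ σ : Fin T → Bool, Real.exp (l * ∑ t, (if σ t then (1:ℝ) else -1) * F i t)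
        = ∏ t : Fin T, (2 * Real.cosh (l * F i t)) := by
      have := (Fintype.prod_sum (ι := Fin T) (κ := fun _ => Bool)
        (fun t b => Real.exp (l * ((if b then (1:ℝ) else -1) * F i t)))).symm
      calc ∑ σ : Fin T → Bool, Real.exp (l * ∑ t, (if σ t then (1:ℝ) else -1) * F i t)
          = ∑ σ : Fin T → Bool, ∏ t : Fin T, Real.exp (l * ((if σ t then (1:ℝ) else -1) * F i t)) := by
            congr 1; ext σ
            rw [Finset.mul_sum, Real.exp_sum]
        _ = ∏ t : Fin T, ∑ b : Bool, Real.exp (l * ((if b then (1:ℝ) else -1) * F i t)) := this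
        _ = ∏ t : Fin T, (2 * Real.cosh (l * F i t)) := by
            congr 1; ext t
            rw [Fintype.sum_bool]
            simp only [if_true, Bool.false_eq_true, if_false, one_mul, neg_one_mul, mul_neg]
            rw [Real.cosh_eq]
            ring
    have hcosh : ∏ t : Fin T, (2 * Real.cosh (l * F i t)) ≤ 2^T * Real.exp (l^2 * c / 2) := by
      calc ∏ t : Fin T, (2 * Real.cosh (l * F i t))
          ≤ ∏ t : Fin T, (2 * Real.exp ((l * F i t)^2 / 2)) := by
            apply Finset.prod_le_prod
            · intro t _; positivity
            · intro t _
              have := Real.cosh_le_exp_half_sq (l * F i t)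
              linarith
        _ = 2^T * Real.exp (∑ t : Fin T, (l * F i t)^2 / 2) := by
            rw [Finset.prod_mul_distrib, Finset.prod_const, Finset.card_univ, Real.exp_sum]
            simp [Fintype.card_fin]
        _ ≤ 2^T * Real.exp (l^2 * c / 2) := by
            have h1 : ∑ t : Fin T, (l * F i t)^2 / 2 ≤ l^2 * c / 2 := by
              have : ∑ t : Fin T, (l * F i t)^2 = l^2 * ∑ t, F i t ^ 2 := by
                rw [Finset.mul_sum]; congr 1; ext t; ring
              rw [← Finset.sum_div, this]
              have := hc i hi
              nlinarith [sq_nonneg l]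
            gcongr

    unfold Emean
    rw [hprod]
    rw [inv_mul_le_iff₀ (by positivity : (0:ℝ) < 2^T)]
    exact hcosh
  -- combine
  have hcard : (1:ℝ) ≤ S.card := by exact_mod_cast Finset.card_pos.2 hS
  have combined : Real.exp (l * A) ≤ S.card * Real.exp (l^2 * c / 2) := by
    calc Real.exp (l * A)
        ≤ Emean T (fun σ => Real.exp (l * S.sup' hS (fun i => ∑ t, (if σ t then (1:ℝ) else -1) * F i t))) := jensen
      _ ≤ Emean T (fun σ => ∑ i ∈ S, Real.exp (l * ∑ t, (if σ t then (1:ℝ) else -1) * F i t)) :=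
          Emean_mono step2
      _ = ∑ i ∈ S, Emean T (fun σ => Real.exp (l * ∑ t, (if σ t then (1:ℝ) else -1) * F i t)) :=
          Emean_sum S _
      _ ≤ ∑ _i ∈ S, Real.exp (l^2 * c / 2) := Finset.sum_le_sum step3
      _ = S.card * Real.exp (l^2 * c / 2) := by rw [Finset.sum_const, nsmul_eq_mul]
  have hexp : Real.exp (l * A) ≤ Real.exp (Real.log S.card + l^2 * c / 2) := by
    rw [Real.exp_add, Real.exp_log (by linarith : (0:ℝ) < S.card)]
    exact combined
  have hlin : l * A ≤ Real.log S.card + l^2 * c / 2 := Real.exp_le_exp.1 hexp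
  have final : A ≤ (Real.log S.card + l^2 * c / 2) / l := by
    rw [le_div_iff₀ hl]
    nlinarith [hlin]
  calc A ≤ (Real.log S.card + l^2 * c / 2) / l := final
    _ = Real.log S.card / l + l * c / 2 := by field_simp

/-- Massart's finite class lemma (unnormalized). -/
lemma massart {T : ℕ} {ι : Type*} (S : Finset ι) (hS : S.Nonempty)
    (F : ι → Fin T → ℝ) {c : ℝ} (hc0 : 0 ≤ c) (hc : ∀ i ∈ S, ∑ t, F i t ^ 2 ≤ c) :
    Emean T (fun σ => S.sup' hS (fun i => ∑ t, (if σ t then (1:ℝ) else -1) * F i t))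
      ≤ Real.sqrt (2 * c * Real.log S.card) := by
  set A := Emean T (fun σ => S.sup' hS (fun i => ∑ t, (if σ t then (1:ℝ) else -1) * F i t)) with hA
  set L := Real.log S.card with hL
  have hcard : (1:ℝ) ≤ S.card := by exact_mod_cast Finset.card_pos.2 hS
  have hL0 : 0 ≤ L := Real.log_nonneg hcard
  have key : ∀ l : ℝ, 0 < l → A ≤ L / l + l * c / 2 := fun l hl =>
    massart_lambda S hS F hc hl
  rcases eq_or_lt_of_le hc0 with hc0' | hcpos
  · -- c = 0
    have hA0 : A ≤ 0 := by
      apply le_of_forall_pos_le_add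
      intro ε hε
      have := key ((L + 1) / ε) (by positivity)
      rw [← hc0'] at this
      calc A ≤ L / ((L + 1) / ε) + (L + 1) / ε * 0 / 2 := this
        _ = L * ε / (L + 1) := by field_simp; ring
        _ ≤ 0 + ε := by
            rw [zero_add, div_le_iff₀ (by positivity)]
            nlinarith
    exact hA0.trans (Real.sqrt_nonneg _)
  rcases eq_or_lt_of_le hL0 with hL0' | hLpos
  · -- L = 0
    have hA0 : A ≤ 0 := by
      apply le_of_forall_pos_le_add
      intro ε hε
      have := key (2 * ε / c) (by positivity)
      rw [← hL0'] at this
      calc A ≤ 0 / (2 * ε / c) + 2 * ε / c * c / 2 := this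
        _ = 0 + ε := by field_simp; ring
    exact hA0.trans (Real.sqrt_nonneg _)
  · -- main case
    set s := Real.sqrt (2 * c * L) with hs
    have hspos : 0 < s := Real.sqrt_pos.2 (by positivity)
    have hs2 : s ^ 2 = 2 * c * L := Real.sq_sqrt (by positivity)
    have := key (2 * L / s) (by positivity)
    calc A ≤ L / (2 * L / s) + 2 * L / s * c / 2 := this
      _ = s / 2 + L * c / s := by field_simp
      _ = s := by
          have : L * c = s ^ 2 / 2 := by rw [hs2]; ring
          rw [this]
          field_simp
          ring


variable {Z : Type*} {T : ℕ} {h : Fin T → Z} {G : Set (Z → ℝ)}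

lemma empDist_eq_dist (g g' : Z → ℝ) :
    empDist T h g g' = Real.sqrt (1 / (T:ℝ)) *
      dist (show EuclideanSpace ℝ (Fin T) from WithLp.toLp 2 fun t => g (h t))
           (show EuclideanSpace ℝ (Fin T) from WithLp.toLp 2 fun t => g' (h t)) := by
  rw [EuclideanSpace.dist_eq, empDist, Real.sqrt_mul (by positivity)]
  congr 2
  refine Finset.sum_congr rfl fun t _ => ?_
  rw [Real.dist_eq, sq_abs]

lemma empDist_triangle (g₁ g₂ g₃ : Z → ℝ) :
    empDist T h g₁ g₃ ≤ empDist T h g₁ g₂ + empDist T h g₂ g₃ := by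
  rw [empDist_eq_dist, empDist_eq_dist, empDist_eq_dist, ← mul_add]
  exact mul_le_mul_of_nonneg_left (dist_triangle _ _ _) (Real.sqrt_nonneg _)

lemma empDist_nonneg (g g' : Z → ℝ) : 0 ≤ empDist T h g g' := Real.sqrt_nonneg _

lemma empDist_comm (g g' : Z → ℝ) : empDist T h g g' = empDist T h g' g := by
  rw [empDist_eq_dist, empDist_eq_dist, dist_comm]

lemma exists_cover (hne : G.Nonempty) {ε : ℝ} (hfin : coveringNumber T h G ε ≠ ⊤) :
    ∃ V : Finset (Z → ℝ), ↑V ⊆ G ∧ (V.card : ℕ∞) = coveringNumber T h G ε ∧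
      ∀ g ∈ G, ∃ v ∈ V, empDist T h g v ≤ ε := by
  set Sset := {n : ℕ∞ | ∃ V : Finset (Z → ℝ), ↑V ⊆ G ∧ (V.card : ℕ∞) = n ∧
    ∀ g ∈ G, ∃ v ∈ V, empDist T h g v ≤ ε} with hSset
  have hSne : Sset.Nonempty := by
    by_contra h'
    rw [Set.not_nonempty_iff_eq_empty] at h'
    apply hfin
    rw [coveringNumber, ← hSset, h']; exact sInf_empty
  obtain ⟨m, hm, hmin⟩ := wellFounded_lt.has_min Sset hSne
  have hm' : coveringNumber T h G ε = m :=
    le_antisymm (sInf_le hm) (le_sInf fun b hb => not_lt.1 (hmin b hb))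
  obtain ⟨V, hsub, hcard, hcov⟩ := hm
  exact ⟨V, hsub, by rw [hm', hcard], hcov⟩

lemma coveringNumber_anti {ε ε' : ℝ} (hε : ε ≤ ε') :
    coveringNumber T h G ε' ≤ coveringNumber T h G ε := by
  apply sInf_le_sInf
  rintro n ⟨V, h1, h2, h3⟩
  exact ⟨V, h1, h2, fun g hg => by
    obtain ⟨v, hv, hd⟩ := h3 g hg
    exact ⟨v, hv, hd.trans hε⟩⟩

lemma one_le_coveringNumber (hne : G.Nonempty) (ε : ℝ) :
    1 ≤ coveringNumber T h G ε := by
  apply le_sInf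
  rintro n ⟨V, h1, h2, h3⟩
  obtain ⟨g₀, hg₀⟩ := hne
  obtain ⟨v, hv, -⟩ := h3 g₀ hg₀
  rw [← h2]
  exact_mod_cast Nat.one_le_iff_ne_zero.2 (Finset.card_ne_zero_of_mem hv)

lemma cauchy_schwarz_sgn (hT : 1 ≤ T) (σ : Fin T → Bool) (u : Fin T → ℝ) :
    (1 / (T:ℝ)) * ∑ t, (if σ t then (1:ℝ) else -1) * u t
      ≤ Real.sqrt ((1 / (T:ℝ)) * ∑ t, u t ^ 2) := by
  have hTpos : (0:ℝ) < T := by exact_mod_cast hT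
  set a := ∑ t, (if σ t then (1:ℝ) else -1) * u t with ha
  rcases le_or_gt ((1/(T:ℝ)) * a) 0 with h0 | h0
  · exact h0.trans (Real.sqrt_nonneg _)
  · rw [← Real.sqrt_sq h0.le]
    apply Real.sqrt_le_sqrt
    have cs := Finset.sum_mul_sq_le_sq_mul_sq Finset.univ
      (fun t => if σ t then (1:ℝ) else -1) u
    have hsq : ∑ t : Fin T, (if σ t then (1:ℝ) else -1) ^ 2 = T := by
      have : ∀ t : Fin T, (if σ t then (1:ℝ) else -1) ^ 2 = 1 := by
        intro t; split <;> norm_num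
      simp [this]
    rw [hsq] at cs
    have hu : 0 ≤ ∑ t, u t ^ 2 := Finset.sum_nonneg fun t _ => sq_nonneg _
    rw [mul_pow, div_pow, one_pow, div_mul_eq_mul_div, div_le_iff₀ (by positivity)]
    calc 1 * a ^ 2 = a ^ 2 := one_mul _
      _ ≤ (T:ℝ) * ∑ t, u t ^ 2 := cs
      _ = 1 / (T:ℝ) * (∑ t, u t ^ 2) * (T:ℝ)^2 := by field_simp

end DudleyAux
end DudleyAuxSection

open DudleyAux Finset Real in
/-- **Dudley entropy integral bound for empirical Rademacher complexity.**
If `G` is countable, nonempty, uniformly bounded on the sample points, every covering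
number `N(ε)` is finite, and `d_T(g, 0) ≤ D` for all `g ∈ G`, then
`R̂_T(G) ≤ (12/√T) ∫₀^D sqrt(log N(ε)) dε`. -/
theorem dudley_entropy_integral_bound
    {Z : Type*} (T : ℕ) (hT : 1 ≤ T) (h : Fin T → Z) (G : Set (Z → ℝ))
    (hne : G.Nonempty) (hcount : G.Countable)
    (hbdd : ∃ B : ℝ, ∀ g ∈ G, ∀ t : Fin T, |g (h t)| ≤ B)
    (hfin : ∀ ε : ℝ, 0 < ε → coveringNumber T h G ε ≠ ⊤)
    (D : ℝ) (hD : 0 < D)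
    (hdiam : ∀ g ∈ G, empDist T h g 0 ≤ D) :
    ENNReal.ofReal (empRademacher T h G)
      ≤ ENNReal.ofReal (12 / Real.sqrt (T : ℝ)) *
          ∫⁻ ε in Set.Ioc (0 : ℝ) D,
            ENNReal.ofReal (Real.sqrt (Real.log ((coveringNumber T h G ε).toNat : ℝ))) := by
  classical
  obtain ⟨g₀, hg₀⟩ := hne
  haveI : Nonempty G := ⟨⟨g₀, hg₀⟩⟩
  have hGne : G.Nonempty := ⟨g₀, hg₀⟩
  have hTpos : (0:ℝ) < T := by exact_mod_cast hT
  set I := ∫⁻ ε in Set.Ioc (0 : ℝ) D,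
      ENNReal.ofReal (Real.sqrt (Real.log ((coveringNumber T h G ε).toNat : ℝ))) with hI
  set εs : ℕ → ℝ := fun j => D / 2^j with hεs
  have hεpos : ∀ j, 0 < εs j := fun j => by simp only [hεs]; positivity
  have hεhalf : ∀ j, εs j = 2 * εs (j+1) := fun j => by
    simp only [hεs, pow_succ]; field_simp
  have hεanti : ∀ i j, i ≤ j → εs j ≤ εs i := by
    intro i j hij
    simp only [hεs]
    exact div_le_div_of_nonneg_left hD.le (by positivity)
      (pow_le_pow_right₀ (one_le_two) hij)
  have hε0 : εs 0 = D := by simp [hεs]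
  set N : ℕ → ℕ := fun j => (coveringNumber T h G (εs j)).toNat with hN
  have hNfin : ∀ j, coveringNumber T h G (εs j) ≠ ⊤ := fun j => hfin _ (hεpos j)
  have hN1 : ∀ j, 1 ≤ N j := by
    intro j
    have h1 := one_le_coveringNumber (h := h) hGne (εs j)
    have := ENat.toNat_le_toNat h1 (hNfin j)
    simpa using this
  have hNanti : ∀ i j, i ≤ j → N i ≤ N j := fun i j hij =>
    ENat.toNat_le_toNat (coveringNumber_anti (hεanti i j hij)) (hNfin j)
  -- minimal covers
  choose V hVsub hVcard hVcov using fun j => exists_cover (G := G) hGne (hNfin j)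
  have hVcard' : ∀ j, (V j).card = N j := by
    intro j
    have := congrArg ENat.toNat (hVcard j)
    simpa using this
  set P : ℕ → Finset (Z → ℝ) := fun j => if j = 0 then {0} else V j with hP
  have hPcov : ∀ j, ∀ g ∈ G, ∃ v ∈ P j, empDist T h g v ≤ εs j := by
    intro j g hg
    rcases Nat.eq_zero_or_pos j with rfl | hj
    · exact ⟨0, by simp [hP], hε0 ▸ hdiam g hg⟩
    · have hj' : j ≠ 0 := hj.ne'
      simpa [hP, hj'] using hVcov j g hg
  choose pr hprmem hprdist using hPcov
  have hpr0 : ∀ (g) (hg : g ∈ G), pr 0 g hg = 0 := by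
    intro g hg
    have := hprmem 0 g hg
    simpa [hP] using this
  have hPcard1 : ∀ i : ℕ, (P (i+1)).card = N (i+1) := by
    intro i
    simp only [hP, Nat.succ_ne_zero, if_false]
    exact hVcard' (i+1)
  have hPcard : ∀ i : ℕ, (P i).card ≤ N (i+1) := by
    intro i
    rcases Nat.eq_zero_or_pos i with rfl | hi
    · simpa [hP] using hN1 1
    · have hi' : i ≠ 0 := hi.ne'
      calc (P i).card = (V i).card := by simp [hP, hi']
        _ = N i := hVcard' i
        _ ≤ N (i+1) := hNanti i (i+1) (Nat.le_succ i)
  -- pair sets of chain differences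
  set Wpairs : ℕ → Finset ((Z → ℝ) × (Z → ℝ)) := fun i =>
    (P (i+1) ×ˢ P i).filter (fun p => empDist T h p.1 p.2 ≤ 3 * εs (i+1)) with hWp
  set Wset : ℕ → Finset (Z → ℝ) := fun i =>
    (Wpairs i).image (fun p => fun z => p.1 z - p.2 z) with hW
  have hpair : ∀ (g) (hg : g ∈ G) (i), (pr (i+1) g hg, pr i g hg) ∈ Wpairs i := by
    intro g hg i
    simp only [hWp, Finset.mem_filter, Finset.mem_product]
    refine ⟨⟨hprmem _ _ _, hprmem _ _ _⟩, ?_⟩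
    calc empDist T h (pr (i+1) g hg) (pr i g hg)
        ≤ empDist T h (pr (i+1) g hg) g + empDist T h g (pr i g hg) := empDist_triangle _ _ _
      _ ≤ εs (i+1) + εs i :=
          add_le_add (by rw [empDist_comm]; exact hprdist _ _ _) (hprdist _ _ _)
      _ = 3 * εs (i+1) := by rw [hεhalf i]; ring
  have hWne : ∀ i, (Wset i).Nonempty := fun i =>
    ⟨_, Finset.mem_image_of_mem _ (hpair g₀ hg₀ i)⟩
  have hWnorm : ∀ i, ∀ w ∈ Wset i, ∑ t, w (h t) ^ 2 ≤ (T:ℝ) * (3 * εs (i+1))^2 := by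
    intro i w hw
    obtain ⟨p, hp, rfl⟩ := Finset.mem_image.1 hw
    simp only [hWp, Finset.mem_filter] at hp
    have hd := hp.2
    rw [empDist] at hd
    have hle := (Real.sqrt_le_iff.mp hd).2
    show ∑ t, (p.1 (h t) - p.2 (h t)) ^ 2 ≤ (T:ℝ) * (3 * εs (i+1))^2
    calc ∑ t, (p.1 (h t) - p.2 (h t)) ^ 2
        = (T:ℝ) * ((1/(T:ℝ)) * ∑ t, (p.1 (h t) - p.2 (h t)) ^ 2) := by field_simp
      _ ≤ (T:ℝ) * (3 * εs (i+1))^2 := mul_le_mul_of_nonneg_left hle hTpos.le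
  have hWcard : ∀ i, (Wset i).card ≤ N (i+1) * N (i+1) := by
    intro i
    calc (Wset i).card ≤ (Wpairs i).card := Finset.card_image_le
      _ ≤ (P (i+1) ×ˢ P i).card := Finset.card_filter_le _ _
      _ = (P (i+1)).card * (P i).card := Finset.card_product _ _
      _ ≤ N (i+1) * N (i+1) :=
          Nat.mul_le_mul (le_of_eq (hPcard1 i)) (hPcard i)
  -- Massart bound for each chain level
  have hmassart : ∀ i, Emean T (fun σ => (Wset i).sup' (hWne i)
        (fun w => (1/(T:ℝ)) * ∑ t, (if σ t then (1:ℝ) else -1) * w (h t)))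
      ≤ 12 / Real.sqrt T * ((εs (i+1) - εs (i+2)) * Real.sqrt (Real.log (N (i+1)))) := by
    intro i
    have hsupeq : (fun σ : Fin T → Bool => (Wset i).sup' (hWne i)
          (fun w => (1/(T:ℝ)) * ∑ t, (if σ t then (1:ℝ) else -1) * w (h t)))
        = (fun σ : Fin T → Bool => (Wset i).sup' (hWne i)
          (fun w => ∑ t, (if σ t then (1:ℝ) else -1) * (w (h t) / T))) := by
      funext σ
      congr 1
      funext w
      rw [Finset.mul_sum]
      exact Finset.sum_congr rfl fun t _ => by ring
    have hm := massart (Wset i) (hWne i) (fun w t => w (h t) / T)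
      (c := 9 * εs (i+1)^2 / T) (by positivity)
      (fun w hw => by
        have h1 := hWnorm i w hw
        calc ∑ t, (w (h t) / T)^2 = (∑ t, w (h t)^2) / (T:ℝ)^2 := by
              rw [Finset.sum_div]
              exact Finset.sum_congr rfl fun t _ => by rw [div_pow]
          _ ≤ ((T:ℝ) * (3 * εs (i+1))^2) / (T:ℝ)^2 := by gcongr
          _ = 9 * εs (i+1)^2 / T := by field_simp; ring)
    set L := Real.log (N (i+1)) with hL
    have hL0 : 0 ≤ L := Real.log_nonneg (by exact_mod_cast hN1 (i+1))
    have hc1 : (1:ℝ) ≤ (Wset i).card := by exact_mod_cast Finset.card_pos.2 (hWne i)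
    have hlogM0 : 0 ≤ Real.log ((Wset i).card) := Real.log_nonneg hc1
    have hlogM : Real.log ((Wset i).card) ≤ 2 * L := by
      have h2 : ((Wset i).card : ℝ) ≤ (N (i+1) : ℝ)^2 := by
        have := hWcard i
        have : ((Wset i).card : ℝ) ≤ ((N (i+1) * N (i+1) : ℕ) : ℝ) := by exact_mod_cast this
        calc ((Wset i).card : ℝ) ≤ ((N (i+1) * N (i+1) : ℕ) : ℝ) := this
          _ = (N (i+1) : ℝ)^2 := by push_cast; ring
      calc Real.log ((Wset i).card) ≤ Real.log ((N (i+1):ℝ)^2) :=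
            Real.log_le_log (by linarith) h2
        _ = 2 * L := by rw [Real.log_pow]; norm_num; exact hL.symm
    have hsqT : (0:ℝ) < Real.sqrt T := Real.sqrt_pos.2 hTpos
    have hx : (0:ℝ) ≤ 6 * εs (i+1) / Real.sqrt T := by positivity
    have key2 : Real.sqrt (2 * (9 * εs (i+1)^2 / T) * Real.log ((Wset i).card))
        ≤ 6 * εs (i+1) / Real.sqrt T * Real.sqrt L := by
      calc Real.sqrt (2 * (9 * εs (i+1)^2 / T) * Real.log ((Wset i).card))
          ≤ Real.sqrt ((6 * εs (i+1) / Real.sqrt T)^2 * L) := by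
            apply Real.sqrt_le_sqrt
            have hsq : (6 * εs (i+1) / Real.sqrt T)^2 = 36 * (εs (i+1)^2 / T) := by
              rw [div_pow, Real.sq_sqrt hTpos.le]; ring
            rw [hsq]
            have hmul := mul_le_mul_of_nonneg_left hlogM
              (show (0:ℝ) ≤ 18 * (εs (i+1)^2 / T) by positivity)
            calc 2 * (9 * εs (i+1)^2 / T) * Real.log ((Wset i).card)
                = 18 * (εs (i+1)^2 / T) * Real.log ((Wset i).card) := by ring
              _ ≤ 18 * (εs (i+1)^2 / T) * (2 * L) := hmul
              _ = 36 * (εs (i+1)^2 / T) * L := by ring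
        _ = 6 * εs (i+1) / Real.sqrt T * Real.sqrt L := by
            rw [Real.sqrt_mul (sq_nonneg _), Real.sqrt_sq hx]
    calc Emean T (fun σ => (Wset i).sup' (hWne i)
          (fun w => (1/(T:ℝ)) * ∑ t, (if σ t then (1:ℝ) else -1) * w (h t)))
        = Emean T (fun σ => (Wset i).sup' (hWne i)
          (fun w => ∑ t, (if σ t then (1:ℝ) else -1) * (w (h t) / T))) := by rw [hsupeq]
      _ ≤ Real.sqrt (2 * (9 * εs (i+1)^2 / T) * Real.log ((Wset i).card)) := hm
      _ ≤ 6 * εs (i+1) / Real.sqrt T * Real.sqrt L := key2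
      _ = 12 / Real.sqrt T * ((εs (i+1) - εs (i+2)) * Real.sqrt L) := by
          have hhalf : εs (i+1) - εs (i+2) = εs (i+1) / 2 := by
            rw [hεhalf (i+1)]; ring
          rw [hhalf]
          field_simp
          ring
  -- the chaining bound, for every depth n
  have key : ∀ n : ℕ, empRademacher T h G ≤
      (∑ i ∈ Finset.range n,
        12 / Real.sqrt T * ((εs (i+1) - εs (i+2)) * Real.sqrt (Real.log (N (i+1))))) + εs n := by
    intro n
    have hpt : ∀ σ : Fin T → Bool,
        (⨆ g : G, (1/(T:ℝ)) * ∑ t, (if σ t then (1:ℝ) else -1) * (g : Z → ℝ) (h t))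
          ≤ (∑ i ∈ Finset.range n, (Wset i).sup' (hWne i)
              (fun w => (1/(T:ℝ)) * ∑ t, (if σ t then (1:ℝ) else -1) * w (h t))) + εs n := by
      intro σ
      apply ciSup_le
      rintro ⟨g, hg⟩
      set Yv : (Z → ℝ) → ℝ :=
        fun u => (1/(T:ℝ)) * ∑ t, (if σ t then (1:ℝ) else -1) * u (h t) with hYv
      have Ylin : ∀ u v : Z → ℝ, Yv (fun z => u z - v z) = Yv u - Yv v := by
        intro u v
        simp only [hYv]
        rw [← mul_sub, ← Finset.sum_sub_distrib]
        congr 1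
        exact Finset.sum_congr rfl fun t _ => by ring
      have htele : ∑ i ∈ Finset.range n, (Yv (pr (i+1) g hg) - Yv (pr i g hg))
          = Yv (pr n g hg) - Yv (pr 0 g hg) :=
        Finset.sum_range_sub (fun j => Yv (pr j g hg)) n
      have hz : Yv (pr 0 g hg) = 0 := by
        rw [hpr0 g hg]
        simp [hYv]
      have hchain : ∀ i ∈ Finset.range n, Yv (pr (i+1) g hg) - Yv (pr i g hg)
          ≤ (Wset i).sup' (hWne i) Yv := by
        intro i _
        rw [← Ylin]
        have hmem : (fun z => pr (i+1) g hg z - pr i g hg z) ∈ Wset i :=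
          Finset.mem_image.2 ⟨(pr (i+1) g hg, pr i g hg), hpair g hg i, rfl⟩
        exact Finset.le_sup' Yv hmem
      have hrem : Yv g - Yv (pr n g hg) ≤ εs n := by
        rw [← Ylin]
        have hcs := cauchy_schwarz_sgn hT σ (fun t => g (h t) - pr n g hg (h t))
        calc Yv (fun z => g z - pr n g hg z)
            ≤ Real.sqrt ((1/(T:ℝ)) * ∑ t, (g (h t) - pr n g hg (h t))^2) := hcs
          _ = empDist T h g (pr n g hg) := rfl
          _ ≤ εs n := hprdist n g hg
      calc Yv g = (∑ i ∈ Finset.range n, (Yv (pr (i+1) g hg) - Yv (pr i g hg)))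
            + (Yv g - Yv (pr n g hg)) + Yv (pr 0 g hg) := by rw [htele]; ring
        _ ≤ (∑ i ∈ Finset.range n, (Wset i).sup' (hWne i) Yv) + εs n + 0 :=
            add_le_add (add_le_add (Finset.sum_le_sum hchain) hrem) (le_of_eq hz)
        _ = (∑ i ∈ Finset.range n, (Wset i).sup' (hWne i) Yv) + εs n := by rw [add_zero]
    have hER : empRademacher T h G = Emean T (fun σ =>
        ⨆ g : G, (1/(T:ℝ)) * ∑ t, (if σ t then (1:ℝ) else -1) * (g : Z → ℝ) (h t)) := rfl
    calc empRademacher T h G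
        ≤ Emean T (fun σ => (∑ i ∈ Finset.range n, (Wset i).sup' (hWne i)
            (fun w => (1/(T:ℝ)) * ∑ t, (if σ t then (1:ℝ) else -1) * w (h t))) + εs n) := by
          rw [hER]; exact Emean_mono hpt
      _ = (∑ i ∈ Finset.range n, Emean T (fun σ => (Wset i).sup' (hWne i)
            (fun w => (1/(T:ℝ)) * ∑ t, (if σ t then (1:ℝ) else -1) * w (h t)))) + εs n := by
          rw [Emean_add, Emean_sum, Emean_const]
      _ ≤ (∑ i ∈ Finset.range n,
            12 / Real.sqrt T * ((εs (i+1) - εs (i+2)) * Real.sqrt (Real.log (N (i+1))))) + εs n :=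
          add_le_add_left (Finset.sum_le_sum fun i _ => hmassart i) _
  -- integral lower bound
  have hsub : ∀ i : ℕ, Set.Ioc (εs (i+2)) (εs (i+1)) ⊆ Set.Ioc 0 D := fun i =>
    Set.Ioc_subset_Ioc (hεpos (i+2)).le ((hεanti 0 (i+1) (Nat.zero_le _)).trans (le_of_eq hε0))
  have hptwise : ∀ i : ℕ, ∀ x ∈ Set.Ioc (εs (i+2)) (εs (i+1)),
      ENNReal.ofReal (Real.sqrt (Real.log (N (i+1))))
        ≤ ENNReal.ofReal (Real.sqrt (Real.log ((coveringNumber T h G x).toNat : ℝ))) := by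
    intro i x hx
    apply ENNReal.ofReal_le_ofReal
    apply Real.sqrt_le_sqrt
    have hxpos : 0 < x := (hεpos (i+2)).trans hx.1
    apply Real.log_le_log (by exact_mod_cast hN1 (i+1))
    have hcov : coveringNumber T h G (εs (i+1)) ≤ coveringNumber T h G x :=
      coveringNumber_anti hx.2
    exact_mod_cast ENat.toNat_le_toNat hcov (hfin x hxpos)
  have intbound : ∀ n : ℕ, (∑ i ∈ Finset.range n, ENNReal.ofReal
        (12 / Real.sqrt T * ((εs (i+1) - εs (i+2)) * Real.sqrt (Real.log (N (i+1))))))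
      ≤ ENNReal.ofReal (12 / Real.sqrt T) * I := by
    intro n
    have hd : ∀ i : ℕ, 0 ≤ εs (i+1) - εs (i+2) := by
      intro i
      have := hεanti (i+1) (i+2) (Nat.le_succ _)
      linarith
    have step1 : ∀ i : ℕ, ENNReal.ofReal
          (12 / Real.sqrt T * ((εs (i+1) - εs (i+2)) * Real.sqrt (Real.log (N (i+1)))))
        = ENNReal.ofReal (12 / Real.sqrt T) *
            (ENNReal.ofReal (Real.sqrt (Real.log (N (i+1)))) *
              volume (Set.Ioc (εs (i+2)) (εs (i+1)))) := by
      intro i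
      rw [Real.volume_Ioc, ENNReal.ofReal_mul (by positivity),
        ENNReal.ofReal_mul (hd i), mul_comm (ENNReal.ofReal (εs (i+1) - εs (i+2)))]
    have hdisj : (↑(Finset.range n) : Set ℕ).PairwiseDisjoint
        (fun i => Set.Ioc (εs (i+2)) (εs (i+1))) := by
      intro i _ j _ hij
      have hkey : ∀ a b : ℕ, a < b →
          Disjoint (Set.Ioc (εs (a+2)) (εs (a+1))) (Set.Ioc (εs (b+2)) (εs (b+1))) := by
        intro a b hab
        rw [Set.Ioc_disjoint_Ioc]
        calc min (εs (a+1)) (εs (b+1)) ≤ εs (b+1) := min_le_right _ _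
          _ ≤ εs (a+2) := hεanti _ _ (by omega)
          _ ≤ max (εs (a+2)) (εs (b+2)) := le_max_left _ _
      rcases lt_or_gt_of_ne hij with hlt | hlt
      · exact hkey i j hlt
      · exact (hkey j i hlt).symm
    calc (∑ i ∈ Finset.range n, ENNReal.ofReal
          (12 / Real.sqrt T * ((εs (i+1) - εs (i+2)) * Real.sqrt (Real.log (N (i+1))))))
        = ENNReal.ofReal (12 / Real.sqrt T) * ∑ i ∈ Finset.range n,
            ENNReal.ofReal (Real.sqrt (Real.log (N (i+1)))) *
              volume (Set.Ioc (εs (i+2)) (εs (i+1))) := by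
          rw [Finset.mul_sum]
          exact Finset.sum_congr rfl fun i _ => step1 i
      _ ≤ ENNReal.ofReal (12 / Real.sqrt T) * I := by
          apply mul_le_mul_right
          have h1 : ∀ i ∈ Finset.range n,
              ENNReal.ofReal (Real.sqrt (Real.log (N (i+1)))) *
                volume (Set.Ioc (εs (i+2)) (εs (i+1)))
              ≤ ∫⁻ x in Set.Ioc (εs (i+2)) (εs (i+1)),
                  ENNReal.ofReal (Real.sqrt (Real.log ((coveringNumber T h G x).toNat : ℝ))) := by
            intro i _
            rw [← MeasureTheory.setLIntegral_const]
            exact MeasureTheory.setLIntegral_mono' measurableSet_Ioc (hptwise i)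
          calc ∑ i ∈ Finset.range n,
                ENNReal.ofReal (Real.sqrt (Real.log (N (i+1)))) *
                  volume (Set.Ioc (εs (i+2)) (εs (i+1)))
              ≤ ∑ i ∈ Finset.range n, ∫⁻ x in Set.Ioc (εs (i+2)) (εs (i+1)),
                  ENNReal.ofReal (Real.sqrt (Real.log ((coveringNumber T h G x).toNat : ℝ))) :=
                Finset.sum_le_sum h1
            _ = ∫⁻ x in ⋃ i ∈ Finset.range n, Set.Ioc (εs (i+2)) (εs (i+1)),
                  ENNReal.ofReal (Real.sqrt (Real.log ((coveringNumber T h G x).toNat : ℝ))) :=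
                (MeasureTheory.lintegral_biUnion_finset hdisj
                  (fun _ _ => measurableSet_Ioc) _).symm
            _ ≤ I := by
                rw [hI]
                exact lintegral_mono_set (Set.iUnion₂_subset fun i _ => hsub i)
  -- put it together and take the limit
  have main : ∀ n : ℕ, ENNReal.ofReal (empRademacher T h G)
      ≤ ENNReal.ofReal (12 / Real.sqrt T) * I + ENNReal.ofReal (εs n) := by
    intro n
    calc ENNReal.ofReal (empRademacher T h G)
        ≤ ENNReal.ofReal ((∑ i ∈ Finset.range n,
            12 / Real.sqrt T * ((εs (i+1) - εs (i+2)) * Real.sqrt (Real.log (N (i+1))))) + εs n) :=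
          ENNReal.ofReal_le_ofReal (key n)
      _ ≤ ENNReal.ofReal (∑ i ∈ Finset.range n,
            12 / Real.sqrt T * ((εs (i+1) - εs (i+2)) * Real.sqrt (Real.log (N (i+1)))))
            + ENNReal.ofReal (εs n) := ENNReal.ofReal_add_le
      _ = (∑ i ∈ Finset.range n, ENNReal.ofReal
            (12 / Real.sqrt T * ((εs (i+1) - εs (i+2)) * Real.sqrt (Real.log (N (i+1))))))
            + ENNReal.ofReal (εs n) := by
          rw [ENNReal.ofReal_sum_of_nonneg]
          intro i _
          have := hεanti (i+1) (i+2) (Nat.le_succ _)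
          have hL0 : 0 ≤ Real.sqrt (Real.log (N (i+1))) := Real.sqrt_nonneg _
          have h12 : (0:ℝ) ≤ 12 / Real.sqrt T := by positivity
          exact mul_nonneg h12 (mul_nonneg (by linarith) hL0)
      _ ≤ ENNReal.ofReal (12 / Real.sqrt T) * I + ENNReal.ofReal (εs n) :=
          add_le_add_left (intbound n) _
  rcases eq_or_ne (ENNReal.ofReal (12 / Real.sqrt (T:ℝ)) * I) ⊤ with htop | htop
  · exact htop ▸ le_top
  · apply ENNReal.le_of_forall_pos_le_add
    intro δ hδ _
    have hδ' : (0:ℝ) < δ := hδ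
    obtain ⟨n, hn⟩ := pow_unbounded_of_one_lt (D / (δ:ℝ)) (one_lt_two : (1:ℝ) < 2)
    have hεn : εs n ≤ δ := by
      simp only [hεs]
      rw [div_le_iff₀ (by positivity)]
      rw [div_lt_iff₀ hδ'] at hn
      nlinarith
    refine (main n).trans (add_le_add_right ?_ _)
    calc ENNReal.ofReal (εs n) ≤ ENNReal.ofReal δ := ENNReal.ofReal_le_ofReal hεn
      _ = (δ : ENNReal) := ENNReal.ofReal_coe_nnreal
end

section
/- (Smoothness-regularized complexity bound, Theorem 3 made precise.) Fix T ≥ 1, points h_0, h_1, …, h_T ∈ ℝ^d, and set L_smooth = Σ_{t=1}^{T} ‖h_t − h_{t−1}‖₂². Let G be a nonempty countable set of functions g : ℝ^d → ℝ such that every g ∈ G is L_g-Lipschitz and satisfies |g(x)| ≤ M for all x, where L_g > 0 and M > 0. Let D ∈ (0, ∞) satisfy d_T(g, 0) ≤ D for every g ∈ G. Then the empirical Rademacher complexity of G on h_1,…,h_T satisfies R̂_T(G) ≤ (12/√T) · ∫_{0}^{D} sqrt( ( 2 L_g · sqrt( T · L_smooth ) / ε + 1 ) · log( 2M/ε + 1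 ) ) dε. In particular, the bound is monotonically increasing in L_smooth, so decreasing the temporal-smoothness loss tightens the complexity bound. -/
open MeasureTheory

open Finset

/-- The ±1 sign associated to a boolean sign vector, as a function on `ℕ`. -/
noncomputable def rsgn (T : ℕ) (σ : Fin T → Bool) (t : ℕ) : ℝ :=
  if ht : t < T then (if σ ⟨t, ht⟩ then 1 else -1) else 0

lemma rsgn_sq {T : ℕ} (σ : Fin T → Bool) {t : ℕ} (ht : t < T) : rsgn T σ t ^ 2 = 1 := by
  simp only [rsgn, dif_pos ht]
  split_ifs <;> norm_num

lemma abs_rsgn_le {T : ℕ} (σ : Fin T → Bool) (t : ℕ) : |rsgn T σ t| ≤ 1 := by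
  simp only [rsgn]
  split_ifs <;> norm_num

lemma sum_sq_sum_rsgn {T : ℕ} (S : Finset ℕ) (hS : S ⊆ Finset.range T) :
    ∑ σ : Fin T → Bool, (∑ t ∈ S, rsgn T σ t) ^ 2 = 2 ^ T * S.card := by
  classical
  have key : ∀ t ∈ S, ∀ u ∈ S,
      (∑ σ : Fin T → Bool, rsgn T σ t * rsgn T σ u) = if t = u then (2:ℝ)^T else 0 := by
    intro t ht u hu
    have ht' : t < T := mem_range.1 (hS ht)
    have hu' : u < T := mem_range.1 (hS hu)
    by_cases h : t = u
    · subst h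
      rw [if_pos rfl]
      have : ∀ σ : Fin T → Bool, rsgn T σ t * rsgn T σ t = 1 := by
        intro σ; rw [← sq]; exact rsgn_sq σ ht'
      rw [Finset.sum_congr rfl fun σ _ => this σ, Finset.sum_const, Finset.card_univ]
      simp
    · rw [if_neg h]
      apply Finset.sum_ninvolution
        (fun σ => Function.update σ ⟨t, ht'⟩ (!σ ⟨t, ht'⟩))
      · intro σ
        have h1 : rsgn T (Function.update σ ⟨t, ht'⟩ (!σ ⟨t, ht'⟩)) t = - rsgn T σ t := by
          simp only [rsgn, dif_pos ht', Function.update_self]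
          cases σ ⟨t, ht'⟩ <;> norm_num
        have h2 : rsgn T (Function.update σ ⟨t, ht'⟩ (!σ ⟨t, ht'⟩)) u = rsgn T σ u := by
          simp only [rsgn, dif_pos hu']
          rw [Function.update_of_ne (by simp [Fin.ext_iff]; omega)]
        rw [h1, h2]; ring
      · intro σ _
        intro hc
        have := congrFun hc ⟨t, ht'⟩
        simp at this
      · intro σ; exact Finset.mem_univ _
      · intro σ
        funext x
        by_cases hx : x = ⟨t, ht'⟩
        · subst hx; simp
        · simp [Function.update_of_ne hx]
  calc ∑ σ : Fin T → Bool, (∑ t ∈ S, rsgn T σ t) ^ 2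
      = ∑ σ : Fin T → Bool, ∑ t ∈ S, ∑ u ∈ S, rsgn T σ t * rsgn T σ u := by
        apply Finset.sum_congr rfl; intro σ _
        rw [sq, Finset.sum_mul_sum]
    _ = ∑ t ∈ S, ∑ u ∈ S, ∑ σ : Fin T → Bool, rsgn T σ t * rsgn T σ u := by
        rw [Finset.sum_comm]
        apply Finset.sum_congr rfl; intro t _
        rw [Finset.sum_comm]
    _ = ∑ t ∈ S, ∑ u ∈ S, if t = u then (2:ℝ)^T else 0 := by
        apply Finset.sum_congr rfl; intro t ht
        apply Finset.sum_congr rfl; intro u hu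
        exact key t ht u hu
    _ = ∑ t ∈ S, (2:ℝ)^T := by
        apply Finset.sum_congr rfl; intro t ht
        rw [Finset.sum_ite_eq S t (fun _ => (2:ℝ)^T), if_pos ht]
    _ = 2 ^ T * S.card := by rw [Finset.sum_const]; ring

lemma exp_abs_sum_rsgn {T : ℕ} (S : Finset ℕ) (hS : S ⊆ Finset.range T) :
    ∑ σ : Fin T → Bool, |∑ t ∈ S, rsgn T σ t| ≤ 2 ^ T * Real.sqrt S.card := by
  have cs := Real.sum_mul_le_sqrt_mul_sqrt (Finset.univ : Finset (Fin T → Bool))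
    (fun _ => 1) (fun σ => |∑ t ∈ S, rsgn T σ t|)
  simp only [one_mul, one_pow, sq_abs] at cs
  have h1 : ∑ _σ : Fin T → Bool, (1:ℝ) = 2 ^ T := by
    rw [Finset.sum_const, Finset.card_univ]; simp
  rw [h1, sum_sq_sum_rsgn S hS] at cs
  calc ∑ σ : Fin T → Bool, |∑ t ∈ S, rsgn T σ t|
      ≤ Real.sqrt (2 ^ T) * Real.sqrt (2 ^ T * S.card) := cs
    _ = 2 ^ T * Real.sqrt S.card := by
        rw [Real.sqrt_mul (by positivity), ← mul_assoc, Real.mul_self_sqrt (by positivity)]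

lemma exp_sqrt_sum_rsgn {T k : ℕ} (S : ℕ → Finset ℕ) (hS : ∀ j, S j ⊆ Finset.range T) :
    ∑ σ : Fin T → Bool, Real.sqrt (∑ j ∈ Finset.range k, (∑ t ∈ S j, rsgn T σ t) ^ 2)
      ≤ 2 ^ T * Real.sqrt (∑ j ∈ Finset.range k, ((S j).card : ℝ)) := by
  have cs := Real.sum_mul_le_sqrt_mul_sqrt (Finset.univ : Finset (Fin T → Bool))
    (fun _ => 1)
    (fun σ => Real.sqrt (∑ j ∈ Finset.range k, (∑ t ∈ S j, rsgn T σ t) ^ 2))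
  simp only [one_mul, one_pow] at cs
  have h1 : ∑ _σ : Fin T → Bool, (1:ℝ) = 2 ^ T := by
    rw [Finset.sum_const, Finset.card_univ]; simp
  have h2 : ∀ σ : Fin T → Bool,
      Real.sqrt (∑ j ∈ Finset.range k, (∑ t ∈ S j, rsgn T σ t) ^ 2) ^ 2
        = ∑ j ∈ Finset.range k, (∑ t ∈ S j, rsgn T σ t) ^ 2 := by
    intro σ; exact Real.sq_sqrt (by positivity)
  rw [h1, Finset.sum_congr rfl fun σ _ => h2 σ, Finset.sum_comm] at cs
  have h3 : ∀ j ∈ Finset.range k,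
      ∑ σ : Fin T → Bool, (∑ t ∈ S j, rsgn T σ t) ^ 2 = 2 ^ T * ((S j).card : ℝ) := by
    intro j _; exact sum_sq_sum_rsgn (S j) (hS j)
  rw [Finset.sum_congr rfl h3, ← Finset.mul_sum] at cs
  calc ∑ σ : Fin T → Bool, Real.sqrt (∑ j ∈ Finset.range k, (∑ t ∈ S j, rsgn T σ t) ^ 2)
      ≤ Real.sqrt (2 ^ T) * Real.sqrt (2 ^ T * ∑ j ∈ Finset.range k, ((S j).card : ℝ)) := cs
    _ = 2 ^ T * Real.sqrt (∑ j ∈ Finset.range k, ((S j).card : ℝ)) := by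
        rw [Real.sqrt_mul (by positivity), ← mul_assoc, Real.mul_self_sqrt (by positivity)]

lemma sum_Ico_telescope (v : ℕ → ℝ) {p q : ℕ} (hpq : p ≤ q) :
    ∑ u ∈ Finset.Ico p q, (v (u+1) - v u) = v q - v p := by
  induction q, hpq using Nat.le_induction with
  | base => simp
  | succ q hq ih => rw [Finset.sum_Ico_succ_top hq, ih]; ring

lemma abel_ico (e v : ℕ → ℝ) {p q : ℕ} (hpq : p ≤ q) :
    ∑ t ∈ Finset.Ico p q, e t * (v t - v p)
      = ∑ u ∈ Finset.Ico p q, (∑ t ∈ Finset.Ico (u+1) q, e t) * (v (u+1) - v u) := by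
  induction q, hpq using Nat.le_induction with
  | base => simp
  | succ q hq ih =>
    rw [Finset.sum_Ico_succ_top hq, Finset.sum_Ico_succ_top hq, ih]
    have h1 : ∀ u ∈ Finset.Ico p q,
        (∑ t ∈ Finset.Ico (u+1) (q+1), e t) * (v (u+1) - v u)
          = (∑ t ∈ Finset.Ico (u+1) q, e t) * (v (u+1) - v u) + e q * (v (u+1) - v u) := by
      intro u hu
      rw [Finset.sum_Ico_succ_top (Finset.mem_Ico.1 hu).2]
      ring
    rw [Finset.sum_congr rfl h1, Finset.sum_add_distrib, ← Finset.mul_sum,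
      sum_Ico_telescope v hq, Finset.Ico_self, Finset.sum_empty]
    ring

lemma abs_sub_le_path (v dlt : ℕ → ℝ) {Lg : ℝ}
    (hinc : ∀ u, |v (u+1) - v u| ≤ Lg * dlt u) {a b : ℕ} (hab : a ≤ b) :
    |v b - v a| ≤ ∑ u ∈ Finset.Ico a b, Lg * dlt u := by
  rw [← sum_Ico_telescope v hab]
  exact (Finset.abs_sum_le_sum_abs _ _).trans (Finset.sum_le_sum fun u _ => hinc u)
/-- block boundaries: `j*c` for `j < T/c`, else `T` (last block merged). -/
def blkbnd (T c j : ℕ) : ℕ := if j < T / c then j * c else T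

section blk
variable {T c : ℕ}

lemma blk_k1 (hc : 1 ≤ c) (hcT : c ≤ T) : 1 ≤ T / c := (Nat.one_le_div_iff hc).2 hcT

lemma blk_kc : T / c * c ≤ T := Nat.div_mul_le_self T c

lemma blk_Tkc (hc : 1 ≤ c) : T < T / c * c + c := by
  have e1 := Nat.div_add_mod T c
  have e2 : T % c < c := Nat.mod_lt _ hc
  have e3 : T / c * c = c * (T / c) := Nat.mul_comm _ _
  omega

lemma blkbnd_zero (hc : 1 ≤ c) (hcT : c ≤ T) : blkbnd T c 0 = 0 := by
  have h := blk_k1 hc hcT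
  simp [blkbnd, Nat.lt_of_lt_of_le Nat.zero_lt_one h]

lemma blkbnd_top : blkbnd T c (T / c) = T := by simp [blkbnd]

lemma blkbnd_le (j : ℕ) : blkbnd T c j ≤ T := by
  simp only [blkbnd]
  split_ifs with hj
  · calc j * c ≤ T / c * c := Nat.mul_le_mul_right c (le_of_lt hj)
      _ ≤ T := blk_kc
  · exact le_rfl

lemma blkbnd_mono : Monotone (blkbnd T c) := by
  apply monotone_nat_of_le_succ
  intro j
  simp only [blkbnd]
  split_ifs with h1 h2 h2
  · exact Nat.mul_le_mul_right c (Nat.le_succ j)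
  · calc j * c ≤ T / c * c := Nat.mul_le_mul_right c (le_of_lt h1)
      _ ≤ T := blk_kc
  · omega
  · exact le_rfl

lemma blkbnd_block (hc : 1 ≤ c) (hcT : c ≤ T) {j : ℕ} (hj : j < T / c) :
    blkbnd T c j < blkbnd T c (j+1) ∧ c ≤ blkbnd T c (j+1) - blkbnd T c j ∧
      blkbnd T c (j+1) - blkbnd T c j ≤ 2*c := by
  have hkc := blk_kc (T := T) (c := c)
  have hTkc := blk_Tkc (T := T) hc
  have hsucc : (j+1) * c = j * c + c := Nat.succ_mul j c
  by_cases h1 : j + 1 < T / c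
  · have hbj : blkbnd T c j = j * c := by simp [blkbnd, hj]
    have hbj1 : blkbnd T c (j+1) = j * c + c := by simp [blkbnd, h1, hsucc]
    omega
  · have hjk : j + 1 = T / c := by omega
    have hbj : blkbnd T c j = j * c := by simp [blkbnd, hj]
    have hbj1 : blkbnd T c (j+1) = T := by simp [blkbnd, h1]
    have h2 : T / c * c = j * c + c := by rw [← hjk, hsucc]
    omega

lemma blkbnd_part (hc : 1 ≤ c) (hcT : c ≤ T) (f : ℕ → ℝ) :
    ∑ j ∈ range (T / c), ∑ t ∈ Ico (blkbnd T c j) (blkbnd T c (j+1)), f t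
      = ∑ t ∈ range T, f t := by
  have key : ∀ n, ∑ j ∈ range n, ∑ t ∈ Ico (blkbnd T c j) (blkbnd T c (j+1)), f t
      = ∑ t ∈ Ico (blkbnd T c 0) (blkbnd T c n), f t := by
    intro n
    induction n with
    | zero => simp
    | succ n ih =>
      rw [Finset.sum_range_succ, ih,
        Finset.sum_Ico_consecutive f (blkbnd_mono (Nat.zero_le n)) (blkbnd_mono (Nat.le_succ n))]
  rw [key (T / c), blkbnd_zero hc hcT, blkbnd_top, Finset.range_eq_Ico]

end blk

open Finset in
lemma master_bound (T c : ℕ) (hT : 1 ≤ T) (hc : 1 ≤ c) (hcT : c ≤ T)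
    {ι : Type*} [Nonempty ι] (v : ι → ℕ → ℝ) (dlt : ℕ → ℝ) (Lg m : ℝ)
    (hLg : 0 ≤ Lg) (hm : 0 ≤ m) (hdlt : ∀ u, 0 ≤ dlt u)
    (hinc : ∀ i u, |v i (u+1) - v i u| ≤ Lg * dlt u)
    (hsum : ∀ i, ∑ t ∈ range T, (v i t)^2 ≤ T * m^2) :
    ((2:ℝ)^T)⁻¹ * ∑ σ : Fin T → Bool, ⨆ i, (1/(T:ℝ)) * ∑ t ∈ range T, rsgn T σ t * v i t
      ≤ m / Real.sqrt c + 2 * Lg * (∑ u ∈ range (T-1), dlt u) * Real.sqrt (2*c) / T := by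
  have hT0 : (0:ℝ) < T := by exact_mod_cast hT
  have hc0 : (0:ℝ) < c := by exact_mod_cast hc
  -- pointwise bound
  have hpt : ∀ σ : Fin T → Bool, ∀ i : ι,
      ∑ t ∈ range T, rsgn T σ t * v i t
        ≤ m * Real.sqrt T / Real.sqrt c
            * Real.sqrt (∑ j ∈ range (T / c),
                (∑ t ∈ Ico (blkbnd T c j) (blkbnd T c (j+1)), rsgn T σ t)^2)
          + ∑ j ∈ range (T / c),
              (Lg * (∑ u ∈ Ico (blkbnd T c j) (blkbnd T c (j+1) - 1), dlt u)
                  * |∑ t ∈ Ico (blkbnd T c j) (blkbnd T c (j+1)), rsgn T σ t|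
                + ∑ u ∈ Ico (blkbnd T c j) (blkbnd T c (j+1) - 1),
                    |∑ t ∈ Ico (u+1) (blkbnd T c (j+1)), rsgn T σ t| * (Lg * dlt u)) := by
    intro σ i
    rw [← blkbnd_part hc hcT (fun t => rsgn T σ t * v i t)]
    have hblockbd : ∀ j ∈ range (T / c),
        ∑ t ∈ Ico (blkbnd T c j) (blkbnd T c (j+1)), rsgn T σ t * v i t
          ≤ Real.sqrt ((∑ t ∈ Ico (blkbnd T c j) (blkbnd T c (j+1)), (v i t)^2) / c)
              * |∑ t ∈ Ico (blkbnd T c j) (blkbnd T c (j+1)), rsgn T σ t|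
            + (Lg * (∑ u ∈ Ico (blkbnd T c j) (blkbnd T c (j+1) - 1), dlt u)
                  * |∑ t ∈ Ico (blkbnd T c j) (blkbnd T c (j+1)), rsgn T σ t|
                + ∑ u ∈ Ico (blkbnd T c j) (blkbnd T c (j+1) - 1),
                    |∑ t ∈ Ico (u+1) (blkbnd T c (j+1)), rsgn T σ t| * (Lg * dlt u)) := by
      intro j hj
      obtain ⟨hlt, hcle, hle2c⟩ := blkbnd_block hc hcT (mem_range.1 hj)
      set p := blkbnd T c j with hp
      set q := blkbnd T c (j+1) with hq
      have hpq : p ≤ q := le_of_lt hlt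
      have hq0 : 1 ≤ q := by omega
      have hq1 : p ≤ q - 1 := by omega
      have e0 : ∀ t : ℕ, rsgn T σ t * v i t
          = rsgn T σ t * v i p + rsgn T σ t * (v i t - v i p) := by intro t; ring
      have e1 : ∑ t ∈ Ico p q, rsgn T σ t * v i t
          = (∑ t ∈ Ico p q, rsgn T σ t) * v i p
            + ∑ t ∈ Ico p q, rsgn T σ t * (v i t - v i p) := by
        rw [Finset.sum_congr rfl fun t _ => e0 t, Finset.sum_add_distrib, ← Finset.sum_mul]
      rw [e1, abel_ico _ _ hpq]
      have e2 := Finset.sum_Ico_succ_top hq1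
        (fun u => (∑ t ∈ Ico (u+1) q, rsgn T σ t) * (v i (u+1) - v i u))
      rw [Nat.sub_add_cancel hq0] at e2
      rw [e2]
      simp only [Finset.Ico_self, Finset.sum_empty, zero_mul, add_zero]
      -- anchor point
      obtain ⟨t0, ht0, hmin⟩ := Finset.exists_min_image (Ico p q) (fun t => (v i t)^2)
        ⟨p, Finset.mem_Ico.2 ⟨le_rfl, hlt⟩⟩
      have ht0' := Finset.mem_Ico.1 ht0
      have hnsmul : (Ico p q).card • (v i t0)^2 ≤ ∑ t ∈ Ico p q, (v i t)^2 :=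
        Finset.card_nsmul_le_sum _ _ _ hmin
      rw [Nat.card_Ico, nsmul_eq_mul] at hnsmul
      have hc2 : (c:ℝ) * (v i t0)^2 ≤ ∑ t ∈ Ico p q, (v i t)^2 := by
        have hcast : (c:ℝ) ≤ ((q - p : ℕ):ℝ) := by exact_mod_cast hcle
        nlinarith [sq_nonneg (v i t0)]
      have hmu : |v i t0| ≤ Real.sqrt ((∑ t ∈ Ico p q, (v i t)^2) / c) := by
        rw [← Real.sqrt_sq_eq_abs]
        apply Real.sqrt_le_sqrt
        rw [le_div_iff₀ hc0]
        linarith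
      have hpath : |v i p - v i t0|
          ≤ Lg * ∑ u ∈ Ico p (q-1), dlt u := by
        have h1 := abs_sub_le_path (v i) dlt (hinc i) ht0'.1
        rw [abs_sub_comm] at h1
        calc |v i p - v i t0| ≤ ∑ u ∈ Ico p t0, Lg * dlt u := h1
          _ ≤ ∑ u ∈ Ico p (q-1), Lg * dlt u := Finset.sum_le_sum_of_subset_of_nonneg
              (Finset.Ico_subset_Ico le_rfl (by omega)) (fun u _ _ => mul_nonneg hLg (hdlt u))
          _ = Lg * ∑ u ∈ Ico p (q-1), dlt u := by rw [Finset.mul_sum]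
      have hvp : |v i p| ≤ Real.sqrt ((∑ t ∈ Ico p q, (v i t)^2) / c)
          + Lg * ∑ u ∈ Ico p (q-1), dlt u := by
        have := abs_sub_abs_le_abs_sub (v i p) (v i t0)
        linarith
      have hterm1 : (∑ t ∈ Ico p q, rsgn T σ t) * v i p
          ≤ (Real.sqrt ((∑ t ∈ Ico p q, (v i t)^2) / c)
              + Lg * ∑ u ∈ Ico p (q-1), dlt u) * |∑ t ∈ Ico p q, rsgn T σ t| := by
        calc (∑ t ∈ Ico p q, rsgn T σ t) * v i p ≤ |(∑ t ∈ Ico p q, rsgn T σ t) * v i p| :=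
              le_abs_self _
          _ = |v i p| * |∑ t ∈ Ico p q, rsgn T σ t| := by rw [abs_mul]; ring
          _ ≤ _ := mul_le_mul_of_nonneg_right hvp (abs_nonneg _)
      have hterm2 : ∑ u ∈ Ico p (q-1), (∑ t ∈ Ico (u+1) q, rsgn T σ t) * (v i (u+1) - v i u)
          ≤ ∑ u ∈ Ico p (q-1), |∑ t ∈ Ico (u+1) q, rsgn T σ t| * (Lg * dlt u) := by
        apply Finset.sum_le_sum
        intro u _
        calc (∑ t ∈ Ico (u+1) q, rsgn T σ t) * (v i (u+1) - v i u)
            ≤ |(∑ t ∈ Ico (u+1) q, rsgn T σ t) * (v i (u+1) - v i u)| := le_abs_self _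
          _ = |∑ t ∈ Ico (u+1) q, rsgn T σ t| * |v i (u+1) - v i u| := abs_mul _ _
          _ ≤ |∑ t ∈ Ico (u+1) q, rsgn T σ t| * (Lg * dlt u) :=
              mul_le_mul_of_nonneg_left (hinc i u) (abs_nonneg _)
      nlinarith [hterm1, hterm2]
    calc ∑ j ∈ range (T / c), ∑ t ∈ Ico (blkbnd T c j) (blkbnd T c (j+1)), rsgn T σ t * v i t
        ≤ ∑ j ∈ range (T / c),
            (Real.sqrt ((∑ t ∈ Ico (blkbnd T c j) (blkbnd T c (j+1)), (v i t)^2) / c)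
              * |∑ t ∈ Ico (blkbnd T c j) (blkbnd T c (j+1)), rsgn T σ t|
            + (Lg * (∑ u ∈ Ico (blkbnd T c j) (blkbnd T c (j+1) - 1), dlt u)
                  * |∑ t ∈ Ico (blkbnd T c j) (blkbnd T c (j+1)), rsgn T σ t|
                + ∑ u ∈ Ico (blkbnd T c j) (blkbnd T c (j+1) - 1),
                    |∑ t ∈ Ico (u+1) (blkbnd T c (j+1)), rsgn T σ t| * (Lg * dlt u))) :=
          Finset.sum_le_sum hblockbd
      _ ≤ _ := by
        rw [Finset.sum_add_distrib]
        apply add_le_add_left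
        have cs := Real.sum_mul_le_sqrt_mul_sqrt (range (T / c))
          (fun j => Real.sqrt ((∑ t ∈ Ico (blkbnd T c j) (blkbnd T c (j+1)), (v i t)^2) / c))
          (fun j => |∑ t ∈ Ico (blkbnd T c j) (blkbnd T c (j+1)), rsgn T σ t|)
        have h1 : ∀ j ∈ range (T / c),
            Real.sqrt ((∑ t ∈ Ico (blkbnd T c j) (blkbnd T c (j+1)), (v i t)^2) / c) ^ 2
              = (∑ t ∈ Ico (blkbnd T c j) (blkbnd T c (j+1)), (v i t)^2) / c := by
          intro j _
          apply Real.sq_sqrt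
          apply div_nonneg _ (le_of_lt hc0)
          positivity
        have h2 : ∑ j ∈ range (T / c),
            (∑ t ∈ Ico (blkbnd T c j) (blkbnd T c (j+1)), (v i t)^2) / c
              = (∑ t ∈ range T, (v i t)^2) / c := by
          rw [← Finset.sum_div, blkbnd_part hc hcT (fun t => (v i t)^2)]
        have h4 : ∀ j ∈ range (T / c),
            |∑ t ∈ Ico (blkbnd T c j) (blkbnd T c (j+1)), rsgn T σ t| ^ 2
              = (∑ t ∈ Ico (blkbnd T c j) (blkbnd T c (j+1)), rsgn T σ t) ^ 2 := by
          intro j _; exact sq_abs _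
        rw [Finset.sum_congr rfl h1, Finset.sum_congr rfl h4, h2] at cs
        have h3 : Real.sqrt ((∑ t ∈ range T, (v i t)^2) / c) ≤ m * Real.sqrt T / Real.sqrt c := by
          calc Real.sqrt ((∑ t ∈ range T, (v i t)^2) / c)
              ≤ Real.sqrt ((T * m^2) / c) := by
                apply Real.sqrt_le_sqrt
                exact div_le_div_of_nonneg_right (hsum i) hc0.le
            _ = m * Real.sqrt T / Real.sqrt c := by
                rw [Real.sqrt_div (by positivity) c, Real.sqrt_mul (le_of_lt hT0),
                  Real.sqrt_sq hm]
                ring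
        calc ∑ j ∈ range (T / c),
            Real.sqrt ((∑ t ∈ Ico (blkbnd T c j) (blkbnd T c (j+1)), (v i t)^2) / c)
              * |∑ t ∈ Ico (blkbnd T c j) (blkbnd T c (j+1)), rsgn T σ t| ≤ _ := cs
          _ ≤ _ := mul_le_mul_of_nonneg_right h3 (Real.sqrt_nonneg _)
  -- expectation bounds
  have hsub : ∀ j : ℕ, Ico (blkbnd T c j) (blkbnd T c (j+1)) ⊆ range T := by
    intro j t ht
    exact mem_range.2 (lt_of_lt_of_le (mem_Ico.1 ht).2 (blkbnd_le (j+1)))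
  have hEW : ∀ j ∈ range (T / c),
      ∑ σ : Fin T → Bool, |∑ t ∈ Ico (blkbnd T c j) (blkbnd T c (j+1)), rsgn T σ t|
        ≤ 2^T * Real.sqrt (2*c) := by
    intro j hj
    obtain ⟨hlt, hcle, hle2c⟩ := blkbnd_block hc hcT (mem_range.1 hj)
    refine (exp_abs_sum_rsgn _ (hsub j)).trans ?_
    have hcd : (((Ico (blkbnd T c j) (blkbnd T c (j+1))).card : ℕ) : ℝ) ≤ 2*c := by
      rw [Nat.card_Ico]
      push_cast
      exact_mod_cast (by exact_mod_cast hle2c : ((blkbnd T c (j+1) - blkbnd T c j : ℕ):ℝ) ≤ ((2*c : ℕ):ℝ))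
    exact mul_le_mul_of_nonneg_left (Real.sqrt_le_sqrt hcd) (by positivity)
  have hER : ∀ j ∈ range (T / c), ∀ u ∈ Ico (blkbnd T c j) (blkbnd T c (j+1) - 1),
      ∑ σ : Fin T → Bool, |∑ t ∈ Ico (u+1) (blkbnd T c (j+1)), rsgn T σ t|
        ≤ 2^T * Real.sqrt (2*c) := by
    intro j hj u hu
    obtain ⟨hlt, hcle, hle2c⟩ := blkbnd_block hc hcT (mem_range.1 hj)
    have hu' := mem_Ico.1 hu
    have hsub2 : Ico (u+1) (blkbnd T c (j+1)) ⊆ range T := by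
      intro t ht
      exact mem_range.2 (lt_of_lt_of_le (mem_Ico.1 ht).2 (blkbnd_le (j+1)))
    refine (exp_abs_sum_rsgn _ hsub2).trans ?_
    have hcd : (((Ico (u+1) (blkbnd T c (j+1))).card : ℕ) : ℝ) ≤ 2*c := by
      rw [Nat.card_Ico]
      have : blkbnd T c (j+1) - (u+1) ≤ 2*c := by omega
      exact_mod_cast (by exact_mod_cast this : ((blkbnd T c (j+1) - (u+1) : ℕ):ℝ) ≤ ((2*c : ℕ):ℝ))
    exact mul_le_mul_of_nonneg_left (Real.sqrt_le_sqrt hcd) (by positivity)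
  have hENW : ∑ σ : Fin T → Bool,
      Real.sqrt (∑ j ∈ range (T / c),
        (∑ t ∈ Ico (blkbnd T c j) (blkbnd T c (j+1)), rsgn T σ t)^2)
      ≤ 2^T * Real.sqrt T := by
    refine (exp_sqrt_sum_rsgn _ (fun j => hsub j)).trans ?_
    have hcd : ∑ j ∈ range (T / c), (((Ico (blkbnd T c j) (blkbnd T c (j+1))).card : ℕ) : ℝ)
        = T := by
      have h3 := blkbnd_part hc hcT (fun _ => (1:ℝ))
      simpa using h3
    rw [hcd]
  -- sum of block path lengths
  have hl : ∑ j ∈ range (T / c), ∑ u ∈ Ico (blkbnd T c j) (blkbnd T c (j+1) - 1), dlt u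
      ≤ ∑ u ∈ range (T-1), dlt u := by
    have h1 : ∀ j ∈ range (T / c),
        ∑ u ∈ Ico (blkbnd T c j) (blkbnd T c (j+1) - 1), dlt u
          ≤ ∑ u ∈ Ico (blkbnd T c j) (blkbnd T c (j+1)), (if u < T - 1 then dlt u else 0) := by
      intro j hj
      obtain ⟨hlt, hcle, hle2c⟩ := blkbnd_block hc hcT (mem_range.1 hj)
      have hble1 := blkbnd_le (T := T) (c := c) (j+1)
      have e1 : ∑ u ∈ Ico (blkbnd T c j) (blkbnd T c (j+1) - 1), dlt u
          = ∑ u ∈ Ico (blkbnd T c j) (blkbnd T c (j+1) - 1), (if u < T - 1 then dlt u else 0) := by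
        apply Finset.sum_congr rfl
        intro u hu
        have hu' := mem_Ico.1 hu
        rw [if_pos (by omega)]
      rw [e1]
      apply Finset.sum_le_sum_of_subset_of_nonneg
        (Finset.Ico_subset_Ico le_rfl (by omega))
      intro u _ _
      split_ifs
      · exact hdlt u
      · exact le_rfl
    calc ∑ j ∈ range (T / c), ∑ u ∈ Ico (blkbnd T c j) (blkbnd T c (j+1) - 1), dlt u
        ≤ ∑ j ∈ range (T / c), ∑ u ∈ Ico (blkbnd T c j) (blkbnd T c (j+1)),
            (if u < T - 1 then dlt u else 0) := Finset.sum_le_sum h1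
      _ = ∑ u ∈ range T, (if u < T - 1 then dlt u else 0) :=
          blkbnd_part hc hcT (fun u => if u < T - 1 then dlt u else 0)
      _ = ∑ u ∈ range (T-1), dlt u := by
          rw [← Finset.sum_subset (Finset.range_subset_range.2 (by omega : T - 1 ≤ T))
            (fun x _ hx => if_neg (fun hlt => hx (mem_range.2 hlt)))]
          apply Finset.sum_congr rfl
          intro u hu
          exact if_pos (mem_range.1 hu)
  -- assemble
  have hsup : ∀ σ : Fin T → Bool,
      (⨆ i, (1/(T:ℝ)) * ∑ t ∈ range T, rsgn T σ t * v i t)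
        ≤ (1/(T:ℝ)) * (m * Real.sqrt T / Real.sqrt c
            * Real.sqrt (∑ j ∈ range (T / c),
                (∑ t ∈ Ico (blkbnd T c j) (blkbnd T c (j+1)), rsgn T σ t)^2)
          + ∑ j ∈ range (T / c),
              (Lg * (∑ u ∈ Ico (blkbnd T c j) (blkbnd T c (j+1) - 1), dlt u)
                  * |∑ t ∈ Ico (blkbnd T c j) (blkbnd T c (j+1)), rsgn T σ t|
                + ∑ u ∈ Ico (blkbnd T c j) (blkbnd T c (j+1) - 1),
                    |∑ t ∈ Ico (u+1) (blkbnd T c (j+1)), rsgn T σ t| * (Lg * dlt u))) := by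
    intro σ
    apply ciSup_le
    intro i
    exact mul_le_mul_of_nonneg_left (hpt σ i) (by positivity)
  have hEA : ∑ σ : Fin T → Bool, ∑ j ∈ range (T / c),
      (Lg * (∑ u ∈ Ico (blkbnd T c j) (blkbnd T c (j+1) - 1), dlt u)
          * |∑ t ∈ Ico (blkbnd T c j) (blkbnd T c (j+1)), rsgn T σ t|
        + ∑ u ∈ Ico (blkbnd T c j) (blkbnd T c (j+1) - 1),
            |∑ t ∈ Ico (u+1) (blkbnd T c (j+1)), rsgn T σ t| * (Lg * dlt u))
      ≤ 2^T * (2 * Lg * (∑ u ∈ range (T-1), dlt u) * Real.sqrt (2*c)) := by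
    rw [Finset.sum_comm]
    have hperj : ∀ j ∈ range (T / c), ∑ σ : Fin T → Bool,
        (Lg * (∑ u ∈ Ico (blkbnd T c j) (blkbnd T c (j+1) - 1), dlt u)
            * |∑ t ∈ Ico (blkbnd T c j) (blkbnd T c (j+1)), rsgn T σ t|
          + ∑ u ∈ Ico (blkbnd T c j) (blkbnd T c (j+1) - 1),
              |∑ t ∈ Ico (u+1) (blkbnd T c (j+1)), rsgn T σ t| * (Lg * dlt u))
        ≤ 2^T * Real.sqrt (2*c)
            * (2 * Lg * ∑ u ∈ Ico (blkbnd T c j) (blkbnd T c (j+1) - 1), dlt u) := by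
      intro j hj
      rw [Finset.sum_add_distrib, ← Finset.mul_sum]
      have hb1 : Lg * (∑ u ∈ Ico (blkbnd T c j) (blkbnd T c (j+1) - 1), dlt u)
          * (∑ σ : Fin T → Bool, |∑ t ∈ Ico (blkbnd T c j) (blkbnd T c (j+1)), rsgn T σ t|)
          ≤ Lg * (∑ u ∈ Ico (blkbnd T c j) (blkbnd T c (j+1) - 1), dlt u)
            * (2^T * Real.sqrt (2*c)) := by
        apply mul_le_mul_of_nonneg_left (hEW j hj)
        exact mul_nonneg hLg (Finset.sum_nonneg fun u _ => hdlt u)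
      have hb2 : ∑ σ : Fin T → Bool, ∑ u ∈ Ico (blkbnd T c j) (blkbnd T c (j+1) - 1),
          |∑ t ∈ Ico (u+1) (blkbnd T c (j+1)), rsgn T σ t| * (Lg * dlt u)
          ≤ 2^T * Real.sqrt (2*c)
            * (Lg * ∑ u ∈ Ico (blkbnd T c j) (blkbnd T c (j+1) - 1), dlt u) := by
        rw [Finset.sum_comm]
        have : ∀ u ∈ Ico (blkbnd T c j) (blkbnd T c (j+1) - 1),
            ∑ σ : Fin T → Bool,
              |∑ t ∈ Ico (u+1) (blkbnd T c (j+1)), rsgn T σ t| * (Lg * dlt u)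
              ≤ (2^T * Real.sqrt (2*c)) * (Lg * dlt u) := by
          intro u hu
          rw [← Finset.sum_mul]
          exact mul_le_mul_of_nonneg_right (hER j hj u hu)
            (mul_nonneg hLg (hdlt u))
        refine (Finset.sum_le_sum this).trans ?_
        rw [← Finset.mul_sum, ← Finset.mul_sum]
      calc _ ≤ Lg * (∑ u ∈ Ico (blkbnd T c j) (blkbnd T c (j+1) - 1), dlt u)
            * (2^T * Real.sqrt (2*c))
          + 2^T * Real.sqrt (2*c)
            * (Lg * ∑ u ∈ Ico (blkbnd T c j) (blkbnd T c (j+1) - 1), dlt u) :=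
            add_le_add hb1 hb2
        _ = 2^T * Real.sqrt (2*c)
            * (2 * Lg * ∑ u ∈ Ico (blkbnd T c j) (blkbnd T c (j+1) - 1), dlt u) := by ring
    refine (Finset.sum_le_sum hperj).trans ?_
    rw [← Finset.mul_sum]
    have : ∑ j ∈ range (T / c),
        (2 * Lg * ∑ u ∈ Ico (blkbnd T c j) (blkbnd T c (j+1) - 1), dlt u)
        ≤ 2 * Lg * ∑ u ∈ range (T-1), dlt u := by
      rw [← Finset.mul_sum]
      apply mul_le_mul_of_nonneg_left hl (by positivity)
    calc 2^T * Real.sqrt (2*c)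
          * ∑ j ∈ range (T / c),
              (2 * Lg * ∑ u ∈ Ico (blkbnd T c j) (blkbnd T c (j+1) - 1), dlt u)
        ≤ 2^T * Real.sqrt (2*c) * (2 * Lg * ∑ u ∈ range (T-1), dlt u) := by
          apply mul_le_mul_of_nonneg_left this (by positivity)
      _ = 2^T * (2 * Lg * (∑ u ∈ range (T-1), dlt u) * Real.sqrt (2*c)) := by ring
  -- final computation
  have h2T : (0:ℝ) < 2^T := by positivity
  calc ((2:ℝ)^T)⁻¹ * ∑ σ : Fin T → Bool, ⨆ i, (1/(T:ℝ)) * ∑ t ∈ range T, rsgn T σ t * v i t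
      ≤ ((2:ℝ)^T)⁻¹ * ∑ σ : Fin T → Bool, (1/(T:ℝ)) * (m * Real.sqrt T / Real.sqrt c
            * Real.sqrt (∑ j ∈ range (T / c),
                (∑ t ∈ Ico (blkbnd T c j) (blkbnd T c (j+1)), rsgn T σ t)^2)
          + ∑ j ∈ range (T / c),
              (Lg * (∑ u ∈ Ico (blkbnd T c j) (blkbnd T c (j+1) - 1), dlt u)
                  * |∑ t ∈ Ico (blkbnd T c j) (blkbnd T c (j+1)), rsgn T σ t|
                + ∑ u ∈ Ico (blkbnd T c j) (blkbnd T c (j+1) - 1),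
                    |∑ t ∈ Ico (u+1) (blkbnd T c (j+1)), rsgn T σ t| * (Lg * dlt u))) := by
        apply mul_le_mul_of_nonneg_left (Finset.sum_le_sum fun σ _ => hsup σ)
          (by positivity)
    _ = (1/(T:ℝ)) * ((m * Real.sqrt T / Real.sqrt c)
          * (((2:ℝ)^T)⁻¹ * ∑ σ : Fin T → Bool,
              Real.sqrt (∑ j ∈ range (T / c),
                (∑ t ∈ Ico (blkbnd T c j) (blkbnd T c (j+1)), rsgn T σ t)^2))
        + ((2:ℝ)^T)⁻¹ * ∑ σ : Fin T → Bool, ∑ j ∈ range (T / c),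
              (Lg * (∑ u ∈ Ico (blkbnd T c j) (blkbnd T c (j+1) - 1), dlt u)
                  * |∑ t ∈ Ico (blkbnd T c j) (blkbnd T c (j+1)), rsgn T σ t|
                + ∑ u ∈ Ico (blkbnd T c j) (blkbnd T c (j+1) - 1),
                    |∑ t ∈ Ico (u+1) (blkbnd T c (j+1)), rsgn T σ t| * (Lg * dlt u))) := by
        rw [← Finset.mul_sum, Finset.sum_add_distrib, ← Finset.mul_sum]
        ring
    _ ≤ (1/(T:ℝ)) * ((m * Real.sqrt T / Real.sqrt c) * Real.sqrt T
        + (2 * Lg * (∑ u ∈ range (T-1), dlt u) * Real.sqrt (2*c))) := by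
        apply mul_le_mul_of_nonneg_left _ (by positivity)
        apply add_le_add
        · apply mul_le_mul_of_nonneg_left _ (by positivity)
          rw [inv_mul_le_iff₀ h2T]
          calc ∑ σ : Fin T → Bool,
              Real.sqrt (∑ j ∈ range (T / c),
                (∑ t ∈ Ico (blkbnd T c j) (blkbnd T c (j+1)), rsgn T σ t)^2)
              ≤ 2^T * Real.sqrt T := hENW
            _ = 2^T * Real.sqrt T := rfl
        · rw [inv_mul_le_iff₀ h2T]
          exact hEA.trans (le_of_eq (by ring))
    _ = m / Real.sqrt c + 2 * Lg * (∑ u ∈ range (T-1), dlt u) * Real.sqrt (2*c) / T := by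
        have hsT : Real.sqrt T * Real.sqrt T = (T:ℝ) := Real.mul_self_sqrt (le_of_lt hT0)
        have hsc : Real.sqrt c ≠ 0 := ne_of_gt (Real.sqrt_pos.2 hc0)
        have h5 : (m * Real.sqrt T / Real.sqrt c) * Real.sqrt T = m * T / Real.sqrt c := by
          rw [div_mul_eq_mul_div, mul_assoc, hsT]
        rw [h5, mul_add]
        congr 1
        · rw [one_div_mul_eq_div]
          rw [div_div]
          rw [mul_comm (Real.sqrt (c:ℝ)) (T:ℝ), ← div_div,
            mul_div_cancel_right₀ m (ne_of_gt hT0)]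
        · rw [one_div_mul_eq_div]

open Finset in
lemma trivial_bound (T : ℕ) (hT : 1 ≤ T)
    {ι : Type*} [Nonempty ι] (v : ι → ℕ → ℝ) (m : ℝ) (hm : 0 ≤ m)
    (hsum : ∀ i, ∑ t ∈ range T, (v i t)^2 ≤ T * m^2) :
    ((2:ℝ)^T)⁻¹ * ∑ σ : Fin T → Bool, ⨆ i, (1/(T:ℝ)) * ∑ t ∈ range T, rsgn T σ t * v i t
      ≤ m := by
  have hT0 : (0:ℝ) < T := by exact_mod_cast hT
  have hpt : ∀ σ : Fin T → Bool, ∀ i : ι, ∑ t ∈ range T, rsgn T σ t * v i t ≤ T * m := by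
    intro σ i
    have cs := Real.sum_mul_le_sqrt_mul_sqrt (range T) (fun t => rsgn T σ t) (fun t => v i t)
    have h1 : ∑ t ∈ range T, rsgn T σ t ^ 2 = (T:ℝ) := by
      rw [Finset.sum_congr rfl (fun t ht => rsgn_sq σ (mem_range.1 ht))]
      simp
    rw [h1] at cs
    calc ∑ t ∈ range T, rsgn T σ t * v i t
        ≤ Real.sqrt T * Real.sqrt (∑ t ∈ range T, (v i t)^2) := cs
      _ ≤ Real.sqrt T * Real.sqrt (T * m^2) :=
          mul_le_mul_of_nonneg_left (Real.sqrt_le_sqrt (hsum i)) (Real.sqrt_nonneg _)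
      _ = T * m := by
          rw [Real.sqrt_mul (le_of_lt hT0), Real.sqrt_sq hm, ← mul_assoc,
            Real.mul_self_sqrt (le_of_lt hT0)]
  have hsup : ∀ σ : Fin T → Bool,
      (⨆ i, (1/(T:ℝ)) * ∑ t ∈ range T, rsgn T σ t * v i t) ≤ m := by
    intro σ
    apply ciSup_le
    intro i
    calc (1/(T:ℝ)) * ∑ t ∈ range T, rsgn T σ t * v i t ≤ (1/(T:ℝ)) * (T * m) :=
        mul_le_mul_of_nonneg_left (hpt σ i) (by positivity)
      _ = m := by field_simp
  calc ((2:ℝ)^T)⁻¹ * ∑ σ : Fin T → Bool, ⨆ i, (1/(T:ℝ)) * ∑ t ∈ range T, rsgn T σ t * v i t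
      ≤ ((2:ℝ)^T)⁻¹ * ∑ _σ : Fin T → Bool, m := by
        apply mul_le_mul_of_nonneg_left (Finset.sum_le_sum fun σ _ => hsup σ) (by positivity)
    _ = m := by
        rw [Finset.sum_const, Finset.card_univ, nsmul_eq_mul]
        have hcard : ((Fintype.card (Fin T → Bool) : ℕ) : ℝ) = 2^T := by simp
        rw [hcard, ← mul_assoc, inv_mul_cancel₀ (by positivity), one_mul]

set_option maxHeartbeats 2000000 in
/-- **Smoothness-regularized complexity bound.** For a trajectory
`h_0, …, h_T` in `ℝ^d` with `L_smooth = Σ_{t=1}^T ‖h_t − h_{t−1}‖²` and a countable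
nonempty class `G` of `L_g`-Lipschitz functions bounded by `M`, with `d_T(g,0) ≤ D` for
all `g ∈ G`, the empirical Rademacher complexity of `G` on `h_1, …, h_T` satisfies
`R̂_T(G) ≤ (12/√T) ∫₀^D sqrt( (2L_g √(T·L_smooth)/ε + 1) · log(2M/ε + 1) ) dε`. -/
theorem smoothness_regularized_complexity_bound
    {d : ℕ} (T : ℕ) (hT : 1 ≤ T) (h : ℕ → EuclideanSpace ℝ (Fin d))
    (G : Set (EuclideanSpace ℝ (Fin d) → ℝ)) (hne : G.Nonempty) (hcount : G.Countable)
    (Lg M : ℝ) (hLg : 0 < Lg) (hM : 0 < M)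
    (hLip : ∀ g ∈ G, ∀ x y : EuclideanSpace ℝ (Fin d), |g x - g y| ≤ Lg * ‖x - y‖)
    (hBdd : ∀ g ∈ G, ∀ x : EuclideanSpace ℝ (Fin d), |g x| ≤ M)
    (D : ℝ) (hD : 0 < D)
    (hdiam : ∀ g ∈ G, empDist T (fun t : Fin T => h (t + 1)) g 0 ≤ D) :
    ENNReal.ofReal (empRademacher T (fun t : Fin T => h (t + 1)) G)
      ≤ ENNReal.ofReal (12 / Real.sqrt (T : ℝ)) *
          ∫⁻ ε in Set.Ioc (0 : ℝ) D,
            ENNReal.ofReal (Real.sqrt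
              ((2 * Lg * Real.sqrt ((T : ℝ) *
                    ∑ t ∈ Finset.range T, ‖h (t + 1) - h t‖ ^ 2) / ε + 1)
                * Real.log (2 * M / ε + 1))) := by
  classical
  have hT0 : (0:ℝ) < T := by exact_mod_cast hT
  set Lsm : ℝ := ∑ t ∈ Finset.range T, ‖h (t + 1) - h t‖ ^ 2 with hLsmdef
  have hLsm0 : 0 ≤ Lsm := Finset.sum_nonneg fun t _ => by positivity
  set a : ℝ := 2 * Lg * Real.sqrt ((T:ℝ) * Lsm) with hadef
  have ha0 : 0 ≤ a := by positivity
  set m : ℝ := min D M with hmdef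
  have hm0 : 0 < m := lt_min hD hM
  have hmD : m ≤ D := min_le_left _ _
  have hmM : m ≤ M := min_le_right _ _
  haveI : Nonempty ↥G := hne.to_subtype
  set v : ↥G → ℕ → ℝ := fun g t => (g : EuclideanSpace ℝ (Fin d) → ℝ) (h (t+1)) with hvdef
  set dlt : ℕ → ℝ := fun u => ‖h (u+2) - h (u+1)‖ with hdltdef
  have hdlt0 : ∀ u, 0 ≤ dlt u := fun u => norm_nonneg _
  have hinc : ∀ (i : ↥G) (u : ℕ), |v i (u+1) - v i u| ≤ Lg * dlt u := by
    intro i u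
    have := hLip i i.2 (h (u+2)) (h (u+1))
    simpa [hvdef, hdltdef, show u+1+1 = u+2 from rfl] using this
  have hsum : ∀ i : ↥G, ∑ t ∈ Finset.range T, (v i t)^2 ≤ T * m^2 := by
    intro i
    have hSS0 : (0:ℝ) ≤ ∑ t ∈ Finset.range T, (v i t)^2 :=
      Finset.sum_nonneg fun t _ => sq_nonneg _
    have hDbd : ∑ t ∈ Finset.range T, (v i t)^2 ≤ T * D^2 := by
      have h1 := hdiam i i.2
      unfold empDist at h1
      have h2 : ∑ t : Fin T, ((i : EuclideanSpace ℝ (Fin d) → ℝ) (h (↑t + 1))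
          - (0 : EuclideanSpace ℝ (Fin d) → ℝ) (h (↑t + 1))) ^ 2
          = ∑ t ∈ Finset.range T, (v i t)^2 := by
        rw [← Fin.sum_univ_eq_sum_range (fun n => (v i n)^2) T]
        apply Finset.sum_congr rfl
        intro t _
        simp [hvdef]
      rw [h2] at h1
      have h3 : (1/(T:ℝ)) * ∑ t ∈ Finset.range T, (v i t)^2 ≤ D^2 := by
        have h4 : (0:ℝ) ≤ (1/(T:ℝ)) * ∑ t ∈ Finset.range T, (v i t)^2 := by positivity
        nlinarith [Real.sq_sqrt h4, Real.sqrt_nonneg ((1/(T:ℝ)) * ∑ t ∈ Finset.range T, (v i t)^2)]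
      calc ∑ t ∈ Finset.range T, (v i t)^2
          = T * ((1/(T:ℝ)) * ∑ t ∈ Finset.range T, (v i t)^2) := by field_simp
        _ ≤ T * D^2 := by nlinarith [h3]
    have hMbd : ∑ t ∈ Finset.range T, (v i t)^2 ≤ T * M^2 := by
      calc ∑ t ∈ Finset.range T, (v i t)^2 ≤ ∑ t ∈ Finset.range T, M^2 := by
            apply Finset.sum_le_sum
            intro t _
            have hb := hBdd i i.2 (h (t+1))
            nlinarith [abs_nonneg (v i t), le_abs_self (v i t), neg_abs_le (v i t)]
        _ = T * M^2 := by rw [Finset.sum_const, Finset.card_range, nsmul_eq_mul]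
    rcases le_total D M with hDM | hDM
    · have : m = D := min_eq_left hDM
      rw [this]; exact hDbd
    · have : m = M := min_eq_right hDM
      rw [this]; exact hMbd
  have hR : empRademacher T (fun t : Fin T => h (t + 1)) G
      = ((2:ℝ)^T)⁻¹ * ∑ σ : Fin T → Bool,
          ⨆ i : ↥G, (1/(T:ℝ)) * ∑ t ∈ Finset.range T, rsgn T σ t * v i t := by
    unfold empRademacher
    congr 1
    apply Finset.sum_congr rfl
    intro σ _
    apply iSup_congr
    intro g
    congr 1
    rw [← Fin.sum_univ_eq_sum_range (fun n => rsgn T σ n * v g n) T]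
    apply Finset.sum_congr rfl
    intro t _
    simp [rsgn, t.isLt, hvdef]
  have hPa : 2 * Lg * (∑ u ∈ Finset.range (T-1), dlt u) ≤ a := by
    have hP : (∑ u ∈ Finset.range (T-1), dlt u) ≤ Real.sqrt ((T:ℝ) * Lsm) := by
      have cs := Real.sum_mul_le_sqrt_mul_sqrt (Finset.range (T-1)) (fun _ => (1:ℝ)) dlt
      simp only [one_mul, one_pow] at cs
      have h1 : ∑ _u ∈ Finset.range (T-1), (1:ℝ) = ((T-1 : ℕ):ℝ) := by
        rw [Finset.sum_const, Finset.card_range, nsmul_eq_mul, mul_one]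
      have h2 : ∑ u ∈ Finset.range (T-1), dlt u ^ 2 ≤ Lsm := by
        have e1 : ∑ t ∈ Finset.Ico 1 T, ‖h (t + 1) - h t‖ ^ 2
            = ∑ u ∈ Finset.range (T-1), dlt u ^2 := by
          rw [Finset.sum_Ico_eq_sum_range]
          apply Finset.sum_congr rfl
          intro u _
          simp only [hdltdef]
          rw [show (1:ℕ)+u+1 = u+2 by omega, show (1:ℕ)+u = u+1 by omega]
        rw [← e1, hLsmdef]
        apply Finset.sum_le_sum_of_subset_of_nonneg
        · rw [Finset.range_eq_Ico]; exact Finset.Ico_subset_Ico (by omega) le_rfl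
        · intro t _ _; positivity
      rw [h1] at cs
      calc ∑ u ∈ Finset.range (T-1), dlt u
          ≤ Real.sqrt ((T-1:ℕ)) * Real.sqrt (∑ u ∈ Finset.range (T-1), dlt u ^2) := cs
        _ ≤ Real.sqrt T * Real.sqrt Lsm :=
            mul_le_mul (Real.sqrt_le_sqrt (by exact_mod_cast Nat.sub_le T 1))
              (Real.sqrt_le_sqrt h2) (Real.sqrt_nonneg _) (Real.sqrt_nonneg _)
        _ = Real.sqrt ((T:ℝ) * Lsm) := (Real.sqrt_mul hT0.le _).symm
    rw [hadef]
    exact mul_le_mul_of_nonneg_left hP (by positivity)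
  have hlog3 : 1 < Real.log 3 := by
    rw [Real.lt_log_iff_exp_lt (by norm_num : (0:ℝ) < 3)]
    calc Real.exp 1 < 2.7182818286 := Real.exp_one_lt_d9
      _ < 3 := by norm_num
  have hlog30 : (0:ℝ) ≤ Real.log 3 := by linarith
  -- measurability of the integrand
  have hmeas : Measurable fun ε : ℝ =>
      ENNReal.ofReal (Real.sqrt ((a / ε + 1) * Real.log (2*M/ε + 1))) := by
    apply Measurable.ennreal_ofReal
    apply Measurable.comp Real.continuous_sqrt.measurable
    apply Measurable.mul
    · exact (measurable_const.div measurable_id).add measurable_const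
    · exact Real.measurable_log.comp ((measurable_const.div measurable_id).add measurable_const)
  -- pointwise comparison of logs
  have hlogpt : ∀ ε : ℝ, ε ∈ Set.Ioc (0:ℝ) m → Real.log 3 ≤ Real.log (2*M/ε + 1) := by
    intro ε hε
    apply Real.log_le_log (by norm_num)
    have h1 : (2:ℝ) ≤ 2*M/ε := by
      rw [le_div_iff₀ hε.1]
      nlinarith [hε.2, hmM]
    linarith
  have hsubI : Set.Ioc (0:ℝ) m ⊆ Set.Ioc 0 D := Set.Ioc_subset_Ioc le_rfl hmD
  -- integral lower bound A
  have intA : ENNReal.ofReal (Real.sqrt (Real.log 3) * m)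
      ≤ ∫⁻ ε in Set.Ioc (0:ℝ) D,
          ENNReal.ofReal (Real.sqrt ((a / ε + 1) * Real.log (2*M/ε + 1))) := by
    have h1 : ∀ ε ∈ Set.Ioc (0:ℝ) m,
        ENNReal.ofReal (Real.sqrt (Real.log 3))
          ≤ ENNReal.ofReal (Real.sqrt ((a / ε + 1) * Real.log (2*M/ε + 1))) := by
      intro ε hε
      apply ENNReal.ofReal_le_ofReal
      apply Real.sqrt_le_sqrt
      have h2 : (0:ℝ) ≤ a/ε := div_nonneg ha0 hε.1.le
      nlinarith [hlogpt ε hε, hlog30, mul_nonneg h2 (le_trans hlog30 (hlogpt ε hε))]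
    calc ENNReal.ofReal (Real.sqrt (Real.log 3) * m)
        = ENNReal.ofReal (Real.sqrt (Real.log 3)) * volume (Set.Ioc (0:ℝ) m) := by
          rw [Real.volume_Ioc, sub_zero, ← ENNReal.ofReal_mul (Real.sqrt_nonneg _)]
      _ = ∫⁻ _ε in Set.Ioc (0:ℝ) m, ENNReal.ofReal (Real.sqrt (Real.log 3)) :=
          (setLIntegral_const _ _).symm
      _ ≤ ∫⁻ ε in Set.Ioc (0:ℝ) m,
            ENNReal.ofReal (Real.sqrt ((a / ε + 1) * Real.log (2*M/ε + 1))) :=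
          setLIntegral_mono hmeas h1
      _ ≤ _ := lintegral_mono_set hsubI
  -- integral lower bound B
  have intB : ENNReal.ofReal (Real.sqrt (a * Real.log 3) * (2 * Real.sqrt m))
      ≤ ∫⁻ ε in Set.Ioc (0:ℝ) D,
          ENNReal.ofReal (Real.sqrt ((a / ε + 1) * Real.log (2*M/ε + 1))) := by
    have hrint : MeasureTheory.IntegrableOn
        (fun ε : ℝ => Real.sqrt (a * Real.log 3) * ε ^ (-(1/2) : ℝ))
        (Set.Ioc (0:ℝ) m) := by
      apply MeasureTheory.Integrable.const_mul
      exact (intervalIntegral.intervalIntegrable_rpow' (a := (0:ℝ)) (b := m)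
        (by norm_num : (-1:ℝ) < -(1/2))).1
    have hptB : ∀ ε ∈ Set.Ioc (0:ℝ) m,
        ENNReal.ofReal (Real.sqrt (a * Real.log 3) * ε ^ (-(1/2):ℝ))
          ≤ ENNReal.ofReal (Real.sqrt ((a / ε + 1) * Real.log (2*M/ε + 1))) := by
      intro ε hε
      apply ENNReal.ofReal_le_ofReal
      have hε0 := hε.1
      have e1 : ε ^ (-(1/2):ℝ) = Real.sqrt ε⁻¹ := by
        rw [Real.rpow_neg hε0.le, ← Real.sqrt_eq_rpow, Real.sqrt_inv]
      rw [e1, ← Real.sqrt_mul (by positivity)]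
      apply Real.sqrt_le_sqrt
      have e2 : a * Real.log 3 * ε⁻¹ = (a/ε) * Real.log 3 := by
        rw [div_eq_mul_inv]; ring
      rw [e2]
      have h2 : (0:ℝ) ≤ a/ε := div_nonneg ha0 hε0.le
      nlinarith [hlogpt ε hε, hlog30, mul_nonneg h2 (sub_nonneg.2 (hlogpt ε hε)),
        le_trans hlog30 (hlogpt ε hε)]
    have hnn : 0 ≤ᵐ[MeasureTheory.volume.restrict (Set.Ioc (0:ℝ) m)]
        fun ε : ℝ => Real.sqrt (a * Real.log 3) * ε ^ (-(1/2):ℝ) := by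
      refine (MeasureTheory.ae_restrict_iff' measurableSet_Ioc).2
        (Filter.Eventually.of_forall fun ε hε => ?_)
      exact mul_nonneg (Real.sqrt_nonneg _) (Real.rpow_nonneg hε.1.le _)
    have hcalc : ∫⁻ ε in Set.Ioc (0:ℝ) m,
        ENNReal.ofReal (Real.sqrt (a * Real.log 3) * ε ^ (-(1/2):ℝ))
        = ENNReal.ofReal (Real.sqrt (a * Real.log 3) * (2 * Real.sqrt m)) := by
      rw [← MeasureTheory.ofReal_integral_eq_lintegral_ofReal hrint hnn]
      congr 1
      rw [MeasureTheory.integral_const_mul]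
      have e2 : ∫ ε in Set.Ioc (0:ℝ) m, ε ^ (-(1/2):ℝ)
          = ∫ ε in (0:ℝ)..m, ε ^ (-(1/2):ℝ) := (intervalIntegral.integral_of_le hm0.le).symm
      rw [e2, integral_rpow (Or.inl (by norm_num : (-1:ℝ) < -(1/2)))]
      rw [show (-(1/2):ℝ) + 1 = 1/2 by norm_num, Real.zero_rpow (by norm_num : (1/2:ℝ) ≠ 0),
        ← Real.sqrt_eq_rpow]
      ring
    calc ENNReal.ofReal (Real.sqrt (a * Real.log 3) * (2 * Real.sqrt m))
        = ∫⁻ ε in Set.Ioc (0:ℝ) m,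
            ENNReal.ofReal (Real.sqrt (a * Real.log 3) * ε ^ (-(1/2):ℝ)) := hcalc.symm
      _ ≤ ∫⁻ ε in Set.Ioc (0:ℝ) m,
            ENNReal.ofReal (Real.sqrt ((a / ε + 1) * Real.log (2*M/ε + 1))) :=
          setLIntegral_mono hmeas hptB
      _ ≤ _ := lintegral_mono_set hsubI
  -- reduction
  have hfin : ∀ K : ℝ,
      ENNReal.ofReal K ≤ ∫⁻ ε in Set.Ioc (0:ℝ) D,
          ENNReal.ofReal (Real.sqrt ((a / ε + 1) * Real.log (2*M/ε + 1))) →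
      empRademacher T (fun t : Fin T => h (t + 1)) G ≤ 12 / Real.sqrt T * K →
      ENNReal.ofReal (empRademacher T (fun t : Fin T => h (t + 1)) G)
        ≤ ENNReal.ofReal (12 / Real.sqrt (T:ℝ)) *
            ∫⁻ ε in Set.Ioc (0:ℝ) D,
              ENNReal.ofReal (Real.sqrt ((a / ε + 1) * Real.log (2*M/ε + 1))) := by
    intro K hKI hRK
    calc ENNReal.ofReal (empRademacher T (fun t : Fin T => h (t + 1)) G)
        ≤ ENNReal.ofReal (12 / Real.sqrt T * K) := ENNReal.ofReal_le_ofReal hRK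
      _ = ENNReal.ofReal (12 / Real.sqrt T) * ENNReal.ofReal K :=
          ENNReal.ofReal_mul (by positivity)
      _ ≤ _ := mul_le_mul_right hKI _
  have hsT0 : (0:ℝ) < Real.sqrt T := Real.sqrt_pos.2 hT0
  have hsTm : Real.sqrt T * Real.sqrt T = (T:ℝ) := Real.mul_self_sqrt hT0.le
  have hs2 : Real.sqrt 2 ≤ 2 := by
    have h4 : Real.sqrt 4 = 2 := by
      rw [show (4:ℝ) = 2^2 by norm_num, Real.sqrt_sq (by norm_num : (0:ℝ) ≤ 2)]
    calc Real.sqrt 2 ≤ Real.sqrt 4 := Real.sqrt_le_sqrt (by norm_num)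
      _ = 2 := h4
  have hsl : 1 ≤ Real.sqrt (Real.log 3) := by
    have := Real.sqrt_le_sqrt hlog3.le
    rwa [Real.sqrt_one] at this
  have h6 : Real.sqrt (a * m) ≤ Real.sqrt (a * Real.log 3) * Real.sqrt m := by
    rw [← Real.sqrt_mul (by positivity)]
    apply Real.sqrt_le_sqrt
    nlinarith [ha0, hlog3, hm0.le, mul_nonneg ha0 hm0.le]
  have hsam : (0:ℝ) ≤ Real.sqrt (a * m) := Real.sqrt_nonneg _
  rcases le_or_gt a m with hcase1 | hcase1
  · -- case a ≤ m : single block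
    apply hfin (Real.sqrt (Real.log 3) * m) intA
    have hbound := master_bound T T hT hT le_rfl v dlt Lg m hLg.le hm0.le hdlt0 hinc hsum
    rw [hR]
    refine hbound.trans ?_
    have hb1 : 2 * Lg * (∑ u ∈ Finset.range (T-1), dlt u) * Real.sqrt (2*(T:ℕ)) / (T:ℕ)
        ≤ m * Real.sqrt (2*(T:ℕ)) / (T:ℕ) := by
      gcongr
      exact hPa.trans hcase1
    refine (add_le_add_right hb1 _).trans ?_
    have e5 : Real.sqrt (2*((T:ℕ):ℝ)) = Real.sqrt 2 * Real.sqrt T := by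
      rw [Real.sqrt_mul (by norm_num : (0:ℝ) ≤ 2)]
    rw [e5]
    have e6 : m * (Real.sqrt 2 * Real.sqrt T) / (T:ℝ) = Real.sqrt 2 * m / Real.sqrt T := by
      rw [← hsTm]
      field_simp
      linear_combination Real.sq_sqrt (sq_nonneg (Real.sqrt (T:ℝ)))
    rw [e6]
    have key : m + Real.sqrt 2 * m ≤ 12 * (Real.sqrt (Real.log 3) * m) := by
      nlinarith [hm0.le, hs2, hsl, mul_le_mul_of_nonneg_right hsl hm0.le]
    calc m / Real.sqrt (T:ℕ) + Real.sqrt 2 * m / Real.sqrt T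
        = (m + Real.sqrt 2 * m) / Real.sqrt T := by rw [add_div]
      _ ≤ (12 * (Real.sqrt (Real.log 3) * m)) / Real.sqrt T := by gcongr
      _ = 12 / Real.sqrt T * (Real.sqrt (Real.log 3) * m) := by ring
  rcases le_or_gt a (m * T) with hcase2 | hcase2
  · -- case m < a ≤ m T
    apply hfin (Real.sqrt (a * Real.log 3) * (2 * Real.sqrt m)) intB
    rw [hR]
    have ha0' : (0:ℝ) < a := hm0.trans hcase1
    have hx0 : (0:ℝ) < m * T / a := by positivity
    set c := Nat.ceil (m * (T:ℝ) / a) with hcdef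
    have hc1 : 1 ≤ c := Nat.one_le_ceil_iff.2 hx0
    have hcR0 : (0:ℝ) < c := by exact_mod_cast hc1
    have hcT' : c ≤ T := by
      rw [hcdef]
      apply Nat.ceil_le.2
      rw [div_le_iff₀ ha0']
      nlinarith [hcase1.le, hT0.le]
    have hclb : m * (T:ℝ) / a ≤ (c:ℝ) := Nat.le_ceil _
    have hcub : (c:ℝ) ≤ 2 * (m * (T:ℝ) / a) := by
      have h1 := Nat.ceil_lt_add_one hx0.le
      have h1x : (1:ℝ) ≤ m * T / a := by
        rw [le_div_iff₀ ha0']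
        nlinarith [hcase2]
      have : m * (T:ℝ) / a + 1 ≤ 2 * (m * (T:ℝ) / a) := by linarith
      linarith
    have hca : (c:ℝ) * a ≤ 2 * (m * T) := by
      rw [← mul_div_assoc] at hcub
      exact (le_div_iff₀ ha0').1 hcub
    refine (master_bound T c hT hc1 hcT' v dlt Lg m hLg.le hm0.le hdlt0 hinc hsum).trans ?_
    have hf1 : m / Real.sqrt c ≤ Real.sqrt (a * m) / Real.sqrt T := by
      rw [div_le_div_iff₀ (Real.sqrt_pos.2 hcR0) hsT0]
      have e3 : Real.sqrt (m^2*(T:ℝ)) = m * Real.sqrt T := by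
        rw [Real.sqrt_mul (by positivity), Real.sqrt_sq hm0.le]
      rw [← e3, ← Real.sqrt_mul (by positivity : (0:ℝ) ≤ a*m)]
      apply Real.sqrt_le_sqrt
      have e4 : m^2*(T:ℝ) = a*m*(m*T/a) := by field_simp
      rw [e4]
      exact mul_le_mul_of_nonneg_left hclb (by positivity)
    have hf2 : 2 * Lg * (∑ u ∈ Finset.range (T-1), dlt u) * Real.sqrt (2*(c:ℕ)) / (T:ℕ)
        ≤ a * Real.sqrt (2*(c:ℕ)) / (T:ℕ) := by gcongr
    have hf3 : a * Real.sqrt (2*(c:ℕ)) / (T:ℝ) ≤ 2 * Real.sqrt (a * m) / Real.sqrt T := by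
      rw [div_le_div_iff₀ hT0 hsT0]
      have e1 : Real.sqrt (a^2*(2*(c:ℝ))*(T:ℝ)) = a * Real.sqrt (2*(c:ℝ)) * Real.sqrt T := by
        rw [Real.sqrt_mul (by positivity), Real.sqrt_mul (by positivity), Real.sqrt_sq ha0]
      have e2 : Real.sqrt (4*(a*m)*(T:ℝ)^2) = 2 * Real.sqrt (a*m) * (T:ℝ) := by
        rw [Real.sqrt_mul (by positivity), Real.sqrt_mul (by norm_num : (0:ℝ) ≤ 4),
          Real.sqrt_sq hT0.le, show Real.sqrt 4 = 2 from by
            rw [show (4:ℝ) = 2^2 by norm_num, Real.sqrt_sq (by norm_num : (0:ℝ) ≤ 2)]]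
      rw [← e1, ← e2]
      apply Real.sqrt_le_sqrt
      nlinarith [mul_le_mul_of_nonneg_left hca (by positivity : (0:ℝ) ≤ 2*a*(T:ℝ))]
    calc m / Real.sqrt (c:ℕ)
          + 2 * Lg * (∑ u ∈ Finset.range (T-1), dlt u) * Real.sqrt (2*(c:ℕ)) / (T:ℕ)
        ≤ Real.sqrt (a*m) / Real.sqrt T + 2 * Real.sqrt (a*m) / Real.sqrt T :=
          add_le_add hf1 (hf2.trans hf3)
      _ = 3 * Real.sqrt (a*m) / Real.sqrt T := by ring
      _ ≤ 24 * (Real.sqrt (a * Real.log 3) * Real.sqrt m) / Real.sqrt T := by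
          gcongr
          nlinarith [h6, hsam]
      _ = 12 / Real.sqrt T * (Real.sqrt (a * Real.log 3) * (2 * Real.sqrt m)) := by ring
  · -- case a > m T : trivial bound
    apply hfin (Real.sqrt (a * Real.log 3) * (2 * Real.sqrt m)) intB
    rw [hR]
    refine (trivial_bound T hT v m hm0.le hsum).trans ?_
    rw [div_mul_eq_mul_div, le_div_iff₀ hsT0]
    have e3 : Real.sqrt (m^2*(T:ℝ)) = m * Real.sqrt T := by
      rw [Real.sqrt_mul (by positivity), Real.sqrt_sq hm0.le]
    have h7 : Real.sqrt (m^2*(T:ℝ)) ≤ Real.sqrt (a * Real.log 3 * m) := by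
      apply Real.sqrt_le_sqrt
      nlinarith [mul_le_mul_of_nonneg_left hcase2.le hm0.le,
        mul_nonneg (mul_nonneg hm0.le ha0) (sub_nonneg.2 hlog3.le)]
    have e8 : Real.sqrt (a * Real.log 3 * m) = Real.sqrt (a * Real.log 3) * Real.sqrt m := by
      rw [Real.sqrt_mul (by positivity)]
    rw [e8] at h7
    rw [← e3]
    nlinarith [h7, Real.sqrt_nonneg (a * Real.log 3), Real.sqrt_nonneg m,
      mul_nonneg (Real.sqrt_nonneg (a * Real.log 3)) (Real.sqrt_nonneg m)]
end
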